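/- arXiv:2105.11860 — 9 statements merged into one kernel-verified Lean document; each statement's English description precedes it below -/
import Mathlib

section
/- Let A be an n×n complex arrowhead matrix (diagonal a_1,...,a_n, last column b_1,...,b_{n-1}, last row c_1,...,c_{n-1}). There exists a common eigenvector x of A and A* (i.e., Ax = λx and A*x = conj(λ)x for some λ) that is orthogonal to the standard basis vector e_n if and only if at least one of the following holds: (i) b_j = c_j = 0 for some j ∈ {1,...,n-1}; (ii) there exist i ≠ j in {1,...,n-1} with a_i = a_j and b_i·conj(c_j) = b_j·conj(c_i); (iii) there exist three distinct indices i, j, k in {1,...,n-1} with a_i = a_j = a_k. -/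
open Matrix Complex

noncomputable section

def arrow {n : ℕ} (a : Fin (n + 1) → ℂ) (b c : Fin n → ℂ) :
    Matrix (Fin (n + 1)) (Fin (n + 1)) ℂ := fun i j =>
  if i = j then a i
  else if hi : i = Fin.last n then
    (if hj : j = Fin.last n then 0 else c (j.castPred hj))
  else if hj : j = Fin.last n then b (i.castPred hi)
  else 0

variable {n : ℕ} {a : Fin (n + 1) → ℂ} {b c : Fin n → ℂ}

lemma arrow_cc (i j : Fin n) :
    arrow a b c i.castSucc j.castSucc = if i = j then a i.castSucc else 0 := by
  have hi := (Fin.castSucc_lt_last i).ne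
  have hj := (Fin.castSucc_lt_last j).ne
  simp only [arrow, Fin.castSucc_inj, dif_neg hi, dif_neg hj]

lemma arrow_cl (i : Fin n) : arrow a b c i.castSucc (Fin.last n) = b i := by
  have hi := (Fin.castSucc_lt_last i).ne
  simp only [arrow, if_neg hi, dif_neg hi, dif_pos rfl, Fin.castPred_castSucc]

lemma arrow_lc (j : Fin n) : arrow a b c (Fin.last n) j.castSucc = c j := by
  have hj := (Fin.castSucc_lt_last j).ne
  simp only [arrow, if_neg (Ne.symm hj), dif_pos rfl, dif_neg hj, Fin.castPred_castSucc]

lemma arrow_ll : arrow a b c (Fin.last n) (Fin.last n) = a (Fin.last n) := by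
  simp [arrow]

lemma sum_one (f : Fin n → ℂ) (i : Fin n) (h : ∀ k, k ≠ i → f k = 0) :
    ∑ k, f k = f i :=
  Finset.sum_eq_single i (fun k _ hk => h k hk) (by simp)

lemma sum_two (f : Fin n → ℂ) (i j : Fin n) (hij : i ≠ j)
    (h : ∀ k, k ≠ i → k ≠ j → f k = 0) : ∑ k, f k = f i + f j := by
  calc ∑ k, f k = ∑ k ∈ ({i, j} : Finset (Fin n)), f k := by
        refine (Finset.sum_subset (Finset.subset_univ _) ?_).symm
        intro x _ hx
        simp only [Finset.mem_insert, Finset.mem_singleton, not_or] at hx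
        exact h x hx.1 hx.2
    _ = f i + f j := Finset.sum_pair hij

lemma sum_three (f : Fin n → ℂ) (i j k : Fin n) (hij : i ≠ j) (hjk : j ≠ k) (hik : i ≠ k)
    (h : ∀ m, m ≠ i → m ≠ j → m ≠ k → f m = 0) : ∑ m, f m = f i + f j + f k := by
  calc ∑ m, f m = ∑ m ∈ ({i, j, k} : Finset (Fin n)), f m := by
        refine (Finset.sum_subset (Finset.subset_univ _) ?_).symm
        intro x _ hx
        simp only [Finset.mem_insert, Finset.mem_singleton, not_or] at hx
        exact h x hx.1 hx.2.1 hx.2.2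
    _ = f i + (f j + f k) := by
        rw [Finset.sum_insert (by simp [hij, hik]), Finset.sum_pair hjk]
    _ = f i + f j + f k := by ring

lemma key (lam : ℂ) (y : Fin n → ℂ) (hy : y ≠ 0)
    (hal : ∀ i, y i ≠ 0 → a i.castSucc = lam)
    (hc : ∑ i, c i * y i = 0)
    (hb : ∑ i, (starRingEnd ℂ) (b i) * y i = 0) :
    ∃ x : Fin (n + 1) → ℂ, x ≠ 0 ∧ x (Fin.last n) = 0 ∧
      ∃ l : ℂ, (arrow a b c).mulVec x = l • x ∧
        (arrow a b c)ᴴ.mulVec x = (starRingEnd ℂ l) • x := by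
  refine ⟨Fin.snoc y 0, ?_, Fin.snoc_last .., lam, ?_, ?_⟩
  · intro h
    apply hy
    funext i
    have := congrFun h i.castSucc
    simpa [Fin.snoc_castSucc] using this
  · funext i
    refine Fin.lastCases ?_ ?_ i
    · simp [Matrix.mulVec, dotProduct, Fin.sum_univ_castSucc, Fin.snoc_castSucc,
        Fin.snoc_last, arrow_lc, arrow_ll, hc]
    · intro i0
      simp only [Matrix.mulVec, dotProduct, Fin.sum_univ_castSucc, Fin.snoc_castSucc,
        Fin.snoc_last, arrow_cc, arrow_cl, mul_zero, add_zero, Pi.smul_apply, smul_eq_mul,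
        ite_mul, zero_mul]
      rw [Finset.sum_ite_eq]
      simp only [Finset.mem_univ, if_pos]
      by_cases h0 : y i0 = 0
      · simp [h0]
      · rw [hal i0 h0]
  · funext i
    refine Fin.lastCases ?_ ?_ i
    · simp [Matrix.mulVec, dotProduct, Fin.sum_univ_castSucc, Fin.snoc_castSucc,
        Fin.snoc_last, Matrix.conjTranspose_apply, arrow_cl, arrow_ll, hb]
    · intro i0
      simp only [Matrix.mulVec, dotProduct, Fin.sum_univ_castSucc, Fin.snoc_castSucc,
        Fin.snoc_last, Matrix.conjTranspose_apply, arrow_cc, arrow_lc, mul_zero, add_zero,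
        Pi.smul_apply, smul_eq_mul]
      have : ∀ j : Fin n, star (if j = i0 then a j.castSucc else 0) * y j
          = if j = i0 then star (a i0.castSucc) * y j else 0 := by
        intro j
        by_cases h : j = i0 <;> simp [h]
      simp only [this, Finset.sum_ite_eq', Finset.mem_univ, if_pos]
      by_cases h0 : y i0 = 0
      · simp [h0]
      · rw [hal i0 h0, starRingEnd_apply]

lemma case1 (j : Fin n) (hbj : b j = 0) (hcj : c j = 0) :
    ∃ x : Fin (n + 1) → ℂ, x ≠ 0 ∧ x (Fin.last n) = 0 ∧
      ∃ l : ℂ, (arrow a b c).mulVec x = l • x ∧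
        (arrow a b c)ᴴ.mulVec x = (starRingEnd ℂ l) • x := by
  refine key (a j.castSucc) (fun i => if i = j then 1 else 0) ?_ ?_ ?_ ?_
  · intro h
    have := congrFun h j
    simp at this
  · intro i hi
    rcases eq_or_ne i j with rfl | h
    · rfl
    · simp [h] at hi
  · simp [mul_ite, Finset.sum_ite_eq', hcj]
  · simp [mul_ite, Finset.sum_ite_eq', hbj]

lemma case2 (i j : Fin n) (hij : i ≠ j) (haij : a i.castSucc = a j.castSucc)
    (hbc : b i * (starRingEnd ℂ) (c j) = b j * (starRingEnd ℂ) (c i)) :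
    ∃ x : Fin (n + 1) → ℂ, x ≠ 0 ∧ x (Fin.last n) = 0 ∧
      ∃ l : ℂ, (arrow a b c).mulVec x = l • x ∧
        (arrow a b c)ᴴ.mulVec x = (starRingEnd ℂ l) • x := by
  have hbc' : (starRingEnd ℂ) (b i) * c j = (starRingEnd ℂ) (b j) * c i := by
    have h := congrArg (starRingEnd ℂ) hbc
    simpa [_root_.map_mul] using h
  by_cases h0 : c i = 0 ∧ c j = 0
  · by_cases h1 : b i = 0 ∧ b j = 0
    · exact case1 i h1.1 h0.1
    · set y : Fin n → ℂ :=
        fun k => if k = i then (starRingEnd ℂ) (b j)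
          else if k = j then -((starRingEnd ℂ) (b i)) else 0 with hy
      have hyi : y i = (starRingEnd ℂ) (b j) := by simp [hy]
      have hyj : y j = -((starRingEnd ℂ) (b i)) := by simp [hy, Ne.symm hij]
      refine key (a i.castSucc) y ?_ ?_ ?_ ?_
      · intro h
        rcases not_and_or.mp h1 with hb1 | hb1
        · apply hb1
          have := congrFun h j
          rw [hyj] at this
          simpa using this
        · apply hb1
          have := congrFun h i
          rw [hyi] at this
          simpa using this
      · intro k hk
        rcases eq_or_ne k i with rfl | h2
        · rfl
        rcases eq_or_ne k j with rfl | h3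
        · exact haij.symm
        · simp [hy, h2, h3] at hk
      · rw [sum_two _ i j hij (fun k hk hk' => by simp [hy, hk, hk'])]
        rw [hyi, hyj, h0.1, h0.2]
        ring
      · rw [sum_two _ i j hij (fun k hk hk' => by simp [hy, hk, hk'])]
        rw [hyi, hyj]
        ring
  · set y : Fin n → ℂ :=
      fun k => if k = i then c j else if k = j then -(c i) else 0 with hy
    have hyi : y i = c j := by simp [hy]
    have hyj : y j = -(c i) := by simp [hy, Ne.symm hij]
    refine key (a i.castSucc) y ?_ ?_ ?_ ?_
    · intro h
      rcases not_and_or.mp h0 with hc1 | hc1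
      · apply hc1
        have := congrFun h j
        rw [hyj] at this
        simpa using this
      · apply hc1
        have := congrFun h i
        rw [hyi] at this
        simpa using this
    · intro k hk
      rcases eq_or_ne k i with rfl | h2
      · rfl
      rcases eq_or_ne k j with rfl | h3
      · exact haij.symm
      · simp [hy, h2, h3] at hk
    · rw [sum_two _ i j hij (fun k hk hk' => by simp [hy, hk, hk'])]
      rw [hyi, hyj]
      ring
    · rw [sum_two _ i j hij (fun k hk hk' => by simp [hy, hk, hk'])]
      rw [hyi, hyj]
      linear_combination hbc'

/-- an arrowhead matrix has a reducing eigenvector orthogonal to eₙ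
iff one of conditions (i), (ii), (iii) holds. -/
theorem stmt1 {n : ℕ} (a : Fin (n + 1) → ℂ) (b c : Fin n → ℂ)
    (A : Matrix (Fin (n + 1)) (Fin (n + 1)) ℂ) (hA : A = arrow a b c) :
    (∃ x : Fin (n + 1) → ℂ, x ≠ 0 ∧ x (Fin.last n) = 0 ∧
      ∃ lam : ℂ, A.mulVec x = lam • x ∧
        Aᴴ.mulVec x = (starRingEnd ℂ lam) • x) ↔
    ((∃ j : Fin n, b j = 0 ∧ c j = 0) ∨
     (∃ i j : Fin n, i ≠ j ∧ a i.castSucc = a j.castSucc ∧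
        b i * starRingEnd ℂ (c j) = b j * starRingEnd ℂ (c i)) ∨
     (∃ i j k : Fin n, i ≠ j ∧ j ≠ k ∧ i ≠ k ∧
        a i.castSucc = a j.castSucc ∧ a j.castSucc = a k.castSucc)) := by
  subst hA
  constructor
  · rintro ⟨x, hx0, hxl, lam, hAx, hAHx⟩
    set y : Fin n → ℂ := fun i => x i.castSucc with hydef
    have hyex : ∃ i, y i ≠ 0 := by
      by_contra h
      push_neg at h
      apply hx0
      funext i
      refine Fin.lastCases hxl (fun i => h i) i
    obtain ⟨i0, hi0⟩ := hyex
    have hdiag : ∀ i : Fin n, y i ≠ 0 → a i.castSucc = lam := by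
      intro i hi
      have h1 := congrFun hAx i.castSucc
      simp only [Matrix.mulVec, dotProduct, Fin.sum_univ_castSucc, arrow_cc, arrow_cl,
        hxl, mul_zero, add_zero, Pi.smul_apply, smul_eq_mul, ite_mul, zero_mul] at h1
      rw [Finset.sum_ite_eq, if_pos (Finset.mem_univ i)] at h1
      exact mul_right_cancel₀ hi h1
    have hsc : ∑ i, c i * y i = 0 := by
      have h1 := congrFun hAx (Fin.last n)
      simp only [Matrix.mulVec, dotProduct, Fin.sum_univ_castSucc, arrow_lc, arrow_ll,
        hxl, mul_zero, add_zero, Pi.smul_apply, smul_eq_mul] at h1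
      exact h1
    have hsb : ∑ i, (starRingEnd ℂ) (b i) * y i = 0 := by
      have h1 := congrFun hAHx (Fin.last n)
      simp only [Matrix.mulVec, dotProduct, Fin.sum_univ_castSucc,
        Matrix.conjTranspose_apply, arrow_cl, arrow_ll, hxl, mul_zero, add_zero,
        Pi.smul_apply, smul_eq_mul] at h1
      exact h1
    by_cases h2 : ∃ j, j ≠ i0 ∧ y j ≠ 0
    · obtain ⟨j0, hj0ne, hj0⟩ := h2
      by_cases h3 : ∃ k, k ≠ i0 ∧ k ≠ j0 ∧ y k ≠ 0
      · obtain ⟨k0, hk1, hk2, hk3⟩ := h3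
        right; right
        exact ⟨i0, j0, k0, fun h => hj0ne h.symm, fun h => hk2 h.symm,
          fun h => hk1 h.symm, by rw [hdiag i0 hi0, hdiag j0 hj0],
          by rw [hdiag j0 hj0, hdiag k0 hk3]⟩
      · push_neg at h3
        have e1 : c i0 * y i0 + c j0 * y j0 = 0 := by
          rw [← sum_two (fun k => c k * y k) i0 j0 (fun h => hj0ne h.symm)
            (fun k hk hk' => by simp [h3 k hk hk'])]
          exact hsc
        have e2 : (starRingEnd ℂ) (b i0) * y i0 + (starRingEnd ℂ) (b j0) * y j0 = 0 := by
          rw [← sum_two (fun k => (starRingEnd ℂ) (b k) * y k) i0 j0 (fun h => hj0ne h.symm)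
            (fun k hk hk' => by simp [h3 k hk hk'])]
          exact hsb
        have hyy : y i0 * y j0 ≠ 0 := mul_ne_zero hi0 hj0
        have hcb : c i0 * (starRingEnd ℂ) (b j0) = c j0 * (starRingEnd ℂ) (b i0) := by
          apply mul_right_cancel₀ hyy
          linear_combination ((starRingEnd ℂ) (b j0) * y j0) * e1 - (c j0 * y j0) * e2
        right; left
        refine ⟨i0, j0, fun h => hj0ne h.symm,
          by rw [hdiag i0 hi0, hdiag j0 hj0], ?_⟩
        have h4 := congrArg (starRingEnd ℂ) hcb
        simp only [_root_.map_mul, Complex.conj_conj] at h4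
        linear_combination -h4
    · push_neg at h2
      left
      have e1 : c i0 * y i0 = 0 := by
        rw [← sum_one (fun k => c k * y k) i0 (fun k hk => by simp [h2 k hk])]
        exact hsc
      have e2 : (starRingEnd ℂ) (b i0) * y i0 = 0 := by
        rw [← sum_one (fun k => (starRingEnd ℂ) (b k) * y k) i0
          (fun k hk => by simp [h2 k hk])]
        exact hsb
      have hc0 : c i0 = 0 := (mul_eq_zero.mp e1).resolve_right hi0
      have hb0 : (starRingEnd ℂ) (b i0) = 0 := (mul_eq_zero.mp e2).resolve_right hi0
      refine ⟨i0, ?_, hc0⟩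
      have := congrArg (starRingEnd ℂ) hb0
      simpa using this
  · rintro (⟨j, hbj, hcj⟩ | ⟨i, j, hij, haij, hbc⟩ | ⟨i, j, k, hij, hjk, hik, ha1, ha2⟩)
    · exact case1 j hbj hcj
    · exact case2 i j hij haij hbc
    · by_cases hp : c i * (starRingEnd ℂ) (b j) - c j * (starRingEnd ℂ) (b i) = 0
      · refine case2 i j hij ha1 ?_
        have h4 := congrArg (starRingEnd ℂ) hp
        simp only [map_sub, _root_.map_mul, Complex.conj_conj, map_zero] at h4
        linear_combination -h4
      · set y : Fin n → ℂ := fun m =>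
          if m = i then c j * (starRingEnd ℂ) (b k) - c k * (starRingEnd ℂ) (b j)
          else if m = j then c k * (starRingEnd ℂ) (b i) - c i * (starRingEnd ℂ) (b k)
          else if m = k then c i * (starRingEnd ℂ) (b j) - c j * (starRingEnd ℂ) (b i)
          else 0 with hy
        have hyi : y i = c j * (starRingEnd ℂ) (b k) - c k * (starRingEnd ℂ) (b j) := by
          simp [hy]
        have hyj : y j = c k * (starRingEnd ℂ) (b i) - c i * (starRingEnd ℂ) (b k) := by
          simp [hy, Ne.symm hij]
        have hyk : y k = c i * (starRingEnd ℂ) (b j) - c j * (starRingEnd ℂ) (b i) := by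
          simp [hy, Ne.symm hik, Ne.symm hjk]
        refine key (a i.castSucc) y ?_ ?_ ?_ ?_
        · intro h
          apply hp
          have := congrFun h k
          rw [hyk] at this
          exact this
        · intro m hm
          rcases eq_or_ne m i with rfl | h2
          · rfl
          rcases eq_or_ne m j with rfl | h3
          · exact ha1.symm
          rcases eq_or_ne m k with rfl | h4
          · exact (ha1.trans ha2).symm
          · simp [hy, h2, h3, h4] at hm
        · rw [sum_three _ i j k hij hjk hik
            (fun m hm1 hm2 hm3 => by simp [hy, hm1, hm2, hm3])]
          rw [hyi, hyj, hyk]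
          ring
        · rw [sum_three _ i j k hij hjk hik
            (fun m hm1 hm2 hm3 => by simp [hy, hm1, hm2, hm3])]
          rw [hyi, hyj, hyk]
          ring
end
end

section
/- Let A be an n×n complex arrowhead matrix with the property that every common eigenvector of A and A* (if any) is not orthogonal to e_n. Then any subspace L of ℂ^n that is invariant under both A and A* and contains at least one standard basis vector e_j must equal all of ℂ^n. -/
open Matrix Complex

noncomputable section

lemma arrow_mulVec_apply {n : ℕ} (a : Fin (n + 1) → ℂ) (b c : Fin n → ℂ)
    (x : Fin (n + 1) → ℂ) (i : Fin (n + 1)) (hi : i ≠ Fin.last n) :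
    (arrow a b c).mulVec x i = a i * x i + b (i.castPred hi) * x (Fin.last n) := by
  simp only [Matrix.mulVec, dotProduct]
  rw [Fin.sum_univ_castSucc]
  congr 1
  · rw [Finset.sum_eq_single (i.castPred hi)]
    · rw [Fin.castSucc_castPred]
      simp [arrow]
    · intro k _ hk
      have h1 : i ≠ k.castSucc := by
        intro h; apply hk
        simp [h]
      have h2 : k.castSucc ≠ Fin.last n := (Fin.castSucc_lt_last k).ne
      simp [arrow, h1, hi, h2]
    · simp
  · have h1 : i ≠ Fin.last n := hi
    simp [arrow, h1]

lemma arrow_conjT_mulVec_apply {n : ℕ} (a : Fin (n + 1) → ℂ) (b c : Fin n → ℂ)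
    (x : Fin (n + 1) → ℂ) (i : Fin (n + 1)) (hi : i ≠ Fin.last n) :
    (arrow a b c)ᴴ.mulVec x i =
      (starRingEnd ℂ) (a i) * x i + (starRingEnd ℂ) (c (i.castPred hi)) * x (Fin.last n) := by
  simp only [Matrix.mulVec, dotProduct, Matrix.conjTranspose_apply]
  rw [Fin.sum_univ_castSucc]
  congr 1
  · rw [Finset.sum_eq_single (i.castPred hi)]
    · rw [Fin.castSucc_castPred]
      simp [arrow]
    · intro k _ hk
      have h1 : k.castSucc ≠ i := by
        intro h; apply hk
        simp [← h]
      have h2 : k.castSucc ≠ Fin.last n := (Fin.castSucc_lt_last k).ne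
      simp [arrow, h1, hi, h2]
    · simp
  · have h1 : (Fin.last n) ≠ i := fun h => hi h.symm
    simp [arrow, h1, hi]

/-- if every reducing eigenvector of an arrowhead matrix has a
nonzero last coordinate, then any reducing subspace containing a standard basis
vector is the whole space. -/
theorem stmt2 {n : ℕ} (a : Fin (n + 1) → ℂ) (b c : Fin n → ℂ)
    (A : Matrix (Fin (n + 1)) (Fin (n + 1)) ℂ) (hA : A = arrow a b c)
    (hred : ∀ (x : Fin (n + 1) → ℂ) (lam : ℂ), x ≠ 0 →
      A.mulVec x = lam • x → Aᴴ.mulVec x = (starRingEnd ℂ lam) • x →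
      x (Fin.last n) ≠ 0)
    (L : Submodule ℂ (Fin (n + 1) → ℂ))
    (hAL : ∀ v ∈ L, A.mulVec v ∈ L)
    (hAsL : ∀ v ∈ L, Aᴴ.mulVec v ∈ L)
    (hbasis : ∃ j : Fin (n + 1), (Pi.single j 1 : Fin (n + 1) → ℂ) ∈ L) :
    L = ⊤ := by
  classical
  obtain ⟨j, hj⟩ := hbasis
  -- Step 1: e_last ∈ L
  have hlast : (Pi.single (Fin.last n) 1 : Fin (n + 1) → ℂ) ∈ L := by
    rcases eq_or_ne j (Fin.last n) with rfl | hjne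
    · exact hj
    · set j' := j.castPred hjne with hj'
      have hjc : j'.castSucc = j := Fin.castSucc_castPred j hjne
      have hAe : A.mulVec (Pi.single j 1) =
          a j • (Pi.single j 1 : Fin (n + 1) → ℂ)
            + c j' • (Pi.single (Fin.last n) 1 : Fin (n + 1) → ℂ) := by
        funext i
        rw [hA, Matrix.mulVec_single]
        rcases eq_or_ne i (Fin.last n) with rfl | hine
        · have h0 : Fin.last n ≠ j := fun h => hjne h.symm
          simp [arrow, h0, hjne, Pi.single_apply]
          rfl
        · rcases eq_or_ne i j with rfl | hij
          · simp [arrow, hine, Pi.single_apply, fun h => hine h]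
          · simp [arrow, hij, hine, hjne, Pi.single_apply, fun h => hine h]
      have hAse : Aᴴ.mulVec (Pi.single j 1) =
          (starRingEnd ℂ) (a j) • (Pi.single j 1 : Fin (n + 1) → ℂ) +
            (starRingEnd ℂ) (b j') • (Pi.single (Fin.last n) 1 : Fin (n + 1) → ℂ) := by
        funext i
        rw [hA, Matrix.mulVec_single]
        simp only [Pi.smul_apply, Matrix.col_apply, Matrix.conjTranspose_apply]
        rcases eq_or_ne i (Fin.last n) with rfl | hine
        · simp [arrow, fun h => hjne h, hjne, Pi.single_apply]
          rfl
        · rcases eq_or_ne i j with rfl | hij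
          · simp [arrow, hine, Pi.single_apply, fun h => hine h]
          · have h0 : j ≠ i := fun h => hij h.symm
            simp [arrow, h0, hine, hjne, Pi.single_apply, fun h => hine h]
      rcases eq_or_ne (c j') 0 with hc | hc
      · rcases eq_or_ne (b j') 0 with hb | hb
        · -- e_j is a reducing eigenvector with zero last coordinate: contradiction
          exfalso
          have h1 : A.mulVec (Pi.single j 1) = a j • (Pi.single j 1 : Fin (n+1) → ℂ) := by
            rw [hAe, hc]; simp
          have h2 : Aᴴ.mulVec (Pi.single j 1) =
              (starRingEnd ℂ) (a j) • (Pi.single j 1 : Fin (n+1) → ℂ) := by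
            rw [hAse, hb]; simp
          have hne : (Pi.single j 1 : Fin (n+1) → ℂ) ≠ 0 := by
            intro h
            have := congrFun h j
            simp at this
          have := hred (Pi.single j 1) (a j) hne h1 h2
          apply this
          simp [Pi.single_apply, hjne]
        · -- use Aᴴ e_j to get e_last
          have hmem : (starRingEnd ℂ) (b j') • (Pi.single (Fin.last n) 1 : Fin (n+1) → ℂ) ∈ L := by
            have h0 : (starRingEnd ℂ) (b j') • (Pi.single (Fin.last n) 1 : Fin (n+1) → ℂ) =
                Aᴴ.mulVec (Pi.single j 1)
                  - (starRingEnd ℂ) (a j) • (Pi.single j 1 : Fin (n+1) → ℂ) := by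
              rw [hAse]; abel
            rw [h0]
            exact L.sub_mem (hAsL _ hj) (L.smul_mem _ hj)
          have hb' : (starRingEnd ℂ) (b j') ≠ 0 := by
            simpa using hb
          have := L.smul_mem ((starRingEnd ℂ) (b j'))⁻¹ hmem
          rwa [smul_smul, inv_mul_cancel₀ hb', one_smul] at this
      · have hmem : c j' • (Pi.single (Fin.last n) 1 : Fin (n+1) → ℂ) ∈ L := by
          have h0 : c j' • (Pi.single (Fin.last n) 1 : Fin (n+1) → ℂ) =
              A.mulVec (Pi.single j 1) - a j • (Pi.single j 1 : Fin (n+1) → ℂ) := by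
            rw [hAe]; abel
          rw [h0]
          exact L.sub_mem (hAL _ hj) (L.smul_mem _ hj)
        have := L.smul_mem (c j')⁻¹ hmem
        rwa [smul_smul, inv_mul_cancel₀ hc, one_smul] at this
  -- Step 2: suppose L ≠ ⊤
  by_contra hL
  -- view everything in Euclidean space (definitionally the same module)
  set toE : (Fin (n + 1) → ℂ) ≃ EuclideanSpace ℂ (Fin (n + 1)) :=
    (WithLp.equiv 2 (Fin (n + 1) → ℂ)).symm with htoE
  set L' : Submodule ℂ (EuclideanSpace ℂ (Fin (n + 1))) :=
    L.comap (WithLp.linearEquiv 2 ℂ (Fin (n + 1) → ℂ)).toLinearMap with hL'def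
  have hL' : L' ≠ ⊤ := fun h => hL (by
    rw [eq_top_iff]
    intro x _
    have : toE x ∈ L' := h ▸ Submodule.mem_top
    exact this)
  have hinner : ∀ z w : EuclideanSpace ℂ (Fin (n + 1)),
      (inner ℂ z w : ℂ) = dotProduct (star (toE.symm z)) (toE.symm w) := by
    intro z w
    simp [PiLp.inner_apply, dotProduct, RCLike.inner_apply, mul_comm, htoE]
  have hMne : L'ᗮ ≠ ⊥ := fun h => hL' (Submodule.orthogonal_eq_bot_iff.mp h)
  -- elements of the orthogonal complement have zero last coordinate
  have hM0 : ∀ y ∈ L'ᗮ, (toE.symm y) (Fin.last n) = 0 := by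
    intro y hy
    have hu : toE (Pi.single (Fin.last n) 1) ∈ L' := hlast
    have := (Submodule.mem_orthogonal _ y).mp hy _ hu
    rw [hinner] at this
    simpa [dotProduct, Pi.single_apply, htoE] using this
  have hadj : ∀ (B : Matrix (Fin (n+1)) (Fin (n+1)) ℂ) (z w : Fin (n+1) → ℂ),
      dotProduct (star z) (B.mulVec w) = dotProduct (star (Bᴴ.mulVec z)) w := by
    intro B z w
    rw [dotProduct_mulVec, Matrix.star_mulVec, Matrix.conjTranspose_conjTranspose]
  -- the orthogonal complement is invariant under matrices whose adjoint preserves L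
  have hinv : ∀ (B : Matrix (Fin (n+1)) (Fin (n+1)) ℂ), (∀ v ∈ L, Bᴴ.mulVec v ∈ L) →
      ∀ y ∈ L'ᗮ, toE (B.mulVec (toE.symm y)) ∈ L'ᗮ := by
    intro B hB y hy
    rw [Submodule.mem_orthogonal]
    intro u hu
    rw [hinner]
    have h1 : toE.symm (toE (B.mulVec (toE.symm y))) = B.mulVec (toE.symm y) :=
      toE.symm_apply_apply _
    rw [h1, hadj B]
    have hBu : toE (Bᴴ.mulVec (toE.symm u)) ∈ L' := by
      have : Bᴴ.mulVec (toE.symm u) ∈ L := hB _ hu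
      exact this
    have h2 := (Submodule.mem_orthogonal _ y).mp hy _ hBu
    rw [hinner, toE.symm_apply_apply] at h2
    exact h2
  set T : EuclideanSpace ℂ (Fin (n+1)) →ₗ[ℂ] EuclideanSpace ℂ (Fin (n+1)) :=
    (WithLp.linearEquiv 2 ℂ (Fin (n + 1) → ℂ)).symm.toLinearMap ∘ₗ A.mulVecLin ∘ₗ
      (WithLp.linearEquiv 2 ℂ (Fin (n + 1) → ℂ)).toLinearMap with hT
  have hTeq : ∀ y : EuclideanSpace ℂ (Fin (n+1)), T y = toE (A.mulVec (toE.symm y)) :=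
    fun y => rfl
  have hTM : ∀ y ∈ L'ᗮ, T y ∈ L'ᗮ := by
    intro y hy
    rw [hTeq]
    exact hinv A hAsL y hy
  -- find an eigenvector of A in the orthogonal complement
  haveI : Nontrivial L'ᗮ := Submodule.nontrivial_iff_ne_bot.mpr hMne
  obtain ⟨μ, hμ⟩ := Module.End.exists_eigenvalue (T.restrict hTM)
  obtain ⟨v, hv⟩ := hμ.exists_hasEigenvector
  have hveq : T (v : EuclideanSpace ℂ (Fin (n+1))) = μ • (v : EuclideanSpace ℂ (Fin (n+1))) := by
    have h1 := hv.apply_eq_smul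
    have h2 := congrArg (Subtype.val) h1
    simpa [LinearMap.restrict_apply] using h2
  set x : Fin (n + 1) → ℂ := toE.symm (v : EuclideanSpace ℂ (Fin (n+1))) with hx
  have hxne : x ≠ 0 := by
    intro h
    apply hv.right
    apply Subtype.ext
    have := congrArg toE h
    rw [hx, toE.apply_symm_apply] at this
    rw [this]
    rfl
  have hxeig : A.mulVec x = μ • x := by
    have := congrArg toE.symm hveq
    rw [hTeq, toE.symm_apply_apply] at this
    rw [hx, this]
    rfl
  have hxlast : x (Fin.last n) = 0 := hM0 _ v.2
  -- x_i satisfies a i * x i = μ * x i for i ≠ last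
  have hdiag : ∀ (i : Fin (n+1)) (hi : i ≠ Fin.last n), a i * x i = μ * x i := by
    intro i hi
    have h1 := congrFun hxeig i
    rw [hA, arrow_mulVec_apply a b c x i hi, hxlast] at h1
    simpa using h1
  -- Aᴴ x = conj μ • x
  have hxeig' : Aᴴ.mulVec x = (starRingEnd ℂ μ) • x := by
    funext i
    rcases eq_or_ne i (Fin.last n) with rfl | hi
    · have hmem2 : toE (Aᴴ.mulVec x) ∈ L'ᗮ := by
        have := hinv Aᴴ (by simpa using hAL) _ v.2
        rwa [← hx] at this
      have h0 := hM0 _ hmem2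
      rw [toE.symm_apply_apply] at h0
      rw [h0]
      simp [hxlast]
    · rw [hA, arrow_conjT_mulVec_apply a b c x i hi, hxlast]
      simp only [mul_zero, add_zero, Pi.smul_apply, smul_eq_mul]
      rcases eq_or_ne (x i) 0 with hxi | hxi
      · simp [hxi]
      · have h0 : a i = μ := mul_right_cancel₀ hxi (hdiag i hi)
        rw [h0]
  have := hred x μ hxne hxeig hxeig'
  exact this hxlast
end
end

section
/- Let P be an n×n Hermitian idempotent arrowhead matrix (P = P* = P²). Then either P is diagonal with all diagonal entries equal to 0 or 1, or there exist an index i ∈ {1,...,n-1}, a real number t ∈ (0,1), and α ∈ ℂ with |α| = √(t(1-t)) such that P_{ii} = t, P_{nn} = 1 - t, P_{in} = α, P_{ni} = conj(α), P_{jj} ∈ {0,1} for j ≠ i, j < n, and all other entries of P are zero. -/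
open Matrix Complex

noncomputable section

/-- `P` is an arrowhead matrix: nonzero entries only on the diagonal, last row,
and last column. -/
def IsArrowhead {n : ℕ} (P : Matrix (Fin (n + 1)) (Fin (n + 1)) ℂ) : Prop :=
  ∀ i j, i ≠ j → i ≠ Fin.last n → j ≠ Fin.last n → P i j = 0

lemma zero_or_one_of_mul_self {z : ℂ} (h : z * z = z) : z = 0 ∨ z = 1 := by
  have : z * (z - 1) = 0 := by ring_nf; linear_combination h
  rcases mul_eq_zero.mp this with h | h
  · exact Or.inl h
  · exact Or.inr (by linear_combination h)

/-- classification of Hermitian idempotent arrowhead matrices. -/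
theorem stmt3 {n : ℕ} (P : Matrix (Fin (n + 1)) (Fin (n + 1)) ℂ)
    (harr : IsArrowhead P) (hherm : Pᴴ = P) (hidem : P * P = P) :
    ((∀ i j, i ≠ j → P i j = 0) ∧ (∀ i, P i i = 0 ∨ P i i = 1)) ∨
    (∃ (i : Fin n) (t : ℝ) (α : ℂ), 0 < t ∧ t < 1 ∧
      ‖α‖ = Real.sqrt (t * (1 - t)) ∧
      P i.castSucc i.castSucc = (t : ℂ) ∧
      P (Fin.last n) (Fin.last n) = (1 - t : ℝ) ∧
      P i.castSucc (Fin.last n) = α ∧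
      P (Fin.last n) i.castSucc = starRingEnd ℂ α ∧
      (∀ j : Fin n, j ≠ i →
        (P j.castSucc j.castSucc = 0 ∨ P j.castSucc j.castSucc = 1)) ∧
      (∀ p q, p ≠ q → ¬(p = i.castSucc ∧ q = Fin.last n) →
        ¬(p = Fin.last n ∧ q = i.castSucc) → P p q = 0)) := by
  have herm : ∀ p q, starRingEnd ℂ (P q p) = P p q := by
    intro p q
    conv_rhs => rw [← hherm]
    rfl
  have idem : ∀ p q, ∑ m, P p m * P m q = P p q := by
    intro p q
    rw [← Matrix.mul_apply, hidem]
  have hne : ∀ j : Fin n, j.castSucc ≠ Fin.last n := fun j => (Fin.castSucc_lt_last j).ne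
  have sumrow : ∀ (j : Fin n) (q : Fin (n + 1)),
      ∑ m, P j.castSucc m * P m q
        = P j.castSucc j.castSucc * P j.castSucc q
          + P j.castSucc (Fin.last n) * P (Fin.last n) q := by
    intro j q
    rw [← Finset.sum_subset (Finset.subset_univ {j.castSucc, Fin.last n})]
    · rw [Finset.sum_pair (hne j)]
    · intro m _ hm
      simp only [Finset.mem_insert, Finset.mem_singleton, not_or] at hm
      rw [harr _ _ (Ne.symm hm.1) (hne j) hm.2, zero_mul]
  -- key equations
  have E1 : ∀ j : Fin n,
      P j.castSucc j.castSucc * P j.castSucc j.castSucc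
        + P j.castSucc (Fin.last n) * starRingEnd ℂ (P j.castSucc (Fin.last n))
        = P j.castSucc j.castSucc := by
    intro j
    rw [herm (Fin.last n) j.castSucc, ← sumrow, idem]
  have E2 : ∀ j : Fin n,
      P j.castSucc j.castSucc * P j.castSucc (Fin.last n)
        + P j.castSucc (Fin.last n) * P (Fin.last n) (Fin.last n)
        = P j.castSucc (Fin.last n) := by
    intro j
    rw [← sumrow, idem]
  have E3 : ∀ j k : Fin n, j ≠ k →
      P j.castSucc (Fin.last n) * starRingEnd ℂ (P k.castSucc (Fin.last n)) = 0 := by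
    intro j k hjk
    have h0 : P j.castSucc k.castSucc = 0 :=
      harr _ _ (fun h => hjk (Fin.castSucc_injective n h)) (hne j) (hne k)
    have := sumrow j k.castSucc
    rw [idem, h0, mul_zero, zero_add, ← herm (Fin.last n) k.castSucc] at this
    exact this.symm
  by_cases hA : ∀ j : Fin n, P j.castSucc (Fin.last n) = 0
  · -- diagonal case
    left
    have hoff : ∀ p q, p ≠ q → P p q = 0 := by
      intro p q hpq
      by_cases hp : p = Fin.last n
      · by_cases hq : q = Fin.last n
        · exact absurd (hp.trans hq.symm) hpq
        · obtain ⟨k, rfl⟩ := Fin.exists_castSucc_eq.mpr hq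
          rw [hp, ← herm, hA k, map_zero]
      · by_cases hq : q = Fin.last n
        · obtain ⟨k, rfl⟩ := Fin.exists_castSucc_eq.mpr hp
          rw [hq]; exact hA k
        · exact harr p q hpq hp hq
    refine ⟨hoff, ?_⟩
    intro p
    apply zero_or_one_of_mul_self
    by_cases hp : p = Fin.last n
    · subst hp
      have hsum : ∑ m, P (Fin.last n) m * P m (Fin.last n)
          = P (Fin.last n) (Fin.last n) * P (Fin.last n) (Fin.last n) := by
        apply Finset.sum_eq_single
        · intro m _ hm
          rw [hoff _ _ (Ne.symm hm), zero_mul]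
        · intro h; exact absurd (Finset.mem_univ _) h
      rw [← hsum]
      exact idem _ _
    · obtain ⟨j, rfl⟩ := Fin.exists_castSucc_eq.mpr hp
      have := E1 j
      rw [hA j, zero_mul, add_zero] at this
      exact this
  · -- arrow case
    right
    push_neg at hA
    obtain ⟨i, hi⟩ := hA
    set α := P i.castSucc (Fin.last n) with hα
    have hAj : ∀ j : Fin n, j ≠ i → P j.castSucc (Fin.last n) = 0 := by
      intro j hj
      have := E3 i j (Ne.symm hj)
      rcases mul_eq_zero.mp this with h | h
      · exact absurd h hi
      · have := congrArg (starRingEnd ℂ) h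
        simpa using this
    -- diagonal entries are real
    have hreal : ∀ p, ((P p p).re : ℂ) = P p p := fun p => Complex.conj_eq_iff_re.mp (herm p p)
    set t := (P i.castSucc i.castSucc).re with ht
    have hPii : P i.castSucc i.castSucc = (t : ℂ) := (hreal i.castSucc).symm
    have key : t * t + Complex.normSq α = t := by
      have := E1 i
      rw [hPii, Complex.mul_conj] at this
      exact_mod_cast this
    have hns : 0 < Complex.normSq α := Complex.normSq_pos.mpr hi
    have ht0 : 0 < t := by nlinarith
    have ht1 : t < 1 := by nlinarith
    have habs : ‖α‖ = Real.sqrt (t * (1 - t)) := by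
      have : t * (1 - t) = ‖α‖ ^ 2 := by rw [Complex.sq_norm]; nlinarith
      rw [this, Real.sqrt_sq (norm_nonneg α)]
    have hlast : P (Fin.last n) (Fin.last n) = ((1 - t : ℝ) : ℂ) := by
      have := E2 i
      rw [hPii] at this
      have h1 : α * (P (Fin.last n) (Fin.last n) - (1 - (t : ℂ))) = 0 := by ring_nf; linear_combination this
      rcases mul_eq_zero.mp h1 with h | h
      · exact absurd h hi
      · push_cast
        linear_combination h
    refine ⟨i, t, α, ht0, ht1, habs, hPii, hlast, rfl, (herm _ _).symm, ?_, ?_⟩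
    · intro j hj
      have := E1 j
      rw [hAj j hj, zero_mul, add_zero] at this
      exact zero_or_one_of_mul_self this
    · intro p q hpq hp1 hp2
      by_cases hp : p = Fin.last n
      · by_cases hq : q = Fin.last n
        · exact absurd (hp.trans hq.symm) hpq
        · obtain ⟨k, rfl⟩ := Fin.exists_castSucc_eq.mpr hq
          have hk : k ≠ i := by
            rintro rfl
            exact hp2 ⟨hp, rfl⟩
          rw [hp, ← herm, hAj k hk, map_zero]
      · by_cases hq : q = Fin.last n
        · obtain ⟨k, rfl⟩ := Fin.exists_castSucc_eq.mpr hp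
          have hk : k ≠ i := by
            rintro rfl
            exact hp1 ⟨rfl, hq⟩
          rw [hq]; exact hAj k hk
        · exact harr p q hpq hp hq
end
end

section
/- Let H = diag[h_1,...,h_n] be a real diagonal matrix and K a Hermitian arrowhead matrix with diagonal k_1,...,k_n and last-column entries m_1,...,m_{n-1} all strictly positive (with k_1,...,k_{n-1} pairwise distinct). For every t > 0, the maximal eigenvalue ξ₊(t) of H + tK is strictly greater than h_j + t·k_j for every j = 1,...,n-1, the eigenvalue ξ₊(t) is simple, and a corresponding eigenvector can be chosen with all n coordinates strictly positive. -/
open Matrix Complex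

noncomputable section

def eigs {n : ℕ} (M : Matrix (Fin n) (Fin n) ℂ) : Set ℂ :=
  {μ | ∃ v : Fin n → ℂ, v ≠ 0 ∧ M.mulVec v = μ • v}

lemma arrow_mulVec_castSucc {n : ℕ} (a : Fin (n + 1) → ℂ) (b c : Fin n → ℂ)
    (v : Fin (n + 1) → ℂ) (j : Fin n) :
    (arrow a b c).mulVec v j.castSucc
      = a j.castSucc * v j.castSucc + b j * v (Fin.last n) := by
  have hne : j.castSucc ≠ Fin.last n := (Fin.castSucc_lt_last j).ne
  show ∑ l, arrow a b c j.castSucc l * v l = _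
  rw [Fin.sum_univ_castSucc]
  have h1 : ∀ l : Fin n, arrow a b c j.castSucc l.castSucc
      = if j = l then a j.castSucc else 0 := by
    intro l
    simp only [arrow, (Fin.castSucc_lt_last l).ne, hne, dif_neg, Fin.castSucc_inj]
    split <;> simp [*]
  have h2 : arrow a b c j.castSucc (Fin.last n) = b j := by
    simp [arrow, hne, Fin.castPred_castSucc]
  rw [h2]
  congr 1
  · rw [Finset.sum_congr rfl (fun l _ => by rw [h1 l])]
    simp [Finset.sum_ite_eq]

lemma arrow_mulVec_last {n : ℕ} (a : Fin (n + 1) → ℂ) (b c : Fin n → ℂ)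
    (v : Fin (n + 1) → ℂ) :
    (arrow a b c).mulVec v (Fin.last n)
      = (∑ j : Fin n, c j * v j.castSucc) + a (Fin.last n) * v (Fin.last n) := by
  show ∑ l, arrow a b c (Fin.last n) l * v l = _
  rw [Fin.sum_univ_castSucc]
  congr 1
  · refine Finset.sum_congr rfl fun l _ => ?_
    have : arrow a b c (Fin.last n) l.castSucc = c l := by
      simp [arrow, ((Fin.castSucc_lt_last l).ne).symm, (Fin.castSucc_lt_last l).ne,
        Fin.castPred_castSucc]
    rw [this]
  · simp [arrow]

lemma secular_mono {n : ℕ} (d : Fin (n + 1) → ℝ) (w : Fin n → ℝ)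
    {μ₁ μ₂ : ℝ} (h1 : ∀ j : Fin n, d j.castSucc < μ₁) (h12 : μ₁ < μ₂) :
    μ₁ - d (Fin.last n) - ∑ j, w j ^ 2 / (μ₁ - d j.castSucc)
      < μ₂ - d (Fin.last n) - ∑ j, w j ^ 2 / (μ₂ - d j.castSucc) := by
  have hsum : ∑ j, w j ^ 2 / (μ₂ - d j.castSucc) ≤ ∑ j, w j ^ 2 / (μ₁ - d j.castSucc) := by
    refine Finset.sum_le_sum fun j _ => ?_
    have h0 : 0 < μ₁ - d j.castSucc := sub_pos.2 (h1 j)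
    exact div_le_div_of_nonneg_left (sq_nonneg _) h0 (by linarith)
  linarith
lemma secular_exists {n : ℕ} (d : Fin (n + 1) → ℝ) (w : Fin n → ℝ) (hw : ∀ j, 0 < w j) :
    ∃ ξ : ℝ, (∀ j : Fin n, d j.castSucc < ξ) ∧
      ξ - d (Fin.last n) - ∑ j, w j ^ 2 / (ξ - d j.castSucc) = 0 := by
  cases n with
  | zero => exact ⟨d (Fin.last 0), fun j => j.elim0, by simp⟩
  | succ p =>
    have hne : (Finset.univ : Finset (Fin (p+1))).Nonempty := ⟨0, Finset.mem_univ 0⟩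
    set f : ℝ → ℝ := fun μ => μ - d (Fin.last (p+1)) - ∑ j, w j ^ 2 / (μ - d j.castSucc) with hf
    set maxd : ℝ := Finset.univ.sup' hne (fun j => d j.castSucc) with hmaxd
    obtain ⟨j0, -, hj0⟩ := Finset.exists_mem_eq_sup' hne (fun j => d j.castSucc)
    have hle : ∀ j : Fin (p+1), d j.castSucc ≤ maxd := fun j =>
      Finset.le_sup' (fun j => d j.castSucc) (Finset.mem_univ j)
    set W : ℝ := ∑ j, w j ^ 2 with hW
    have hW0 : 0 ≤ W := Finset.sum_nonneg fun j _ => sq_nonneg _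
    set C : ℝ := max (maxd + 1 - d (Fin.last (p+1))) 1 with hC
    have hC0 : (0:ℝ) < C := lt_of_lt_of_le one_pos (le_max_right _ _)
    have hw0 : 0 < w j0 ^ 2 := pow_pos (hw j0) 2
    set ε : ℝ := min 1 (w j0 ^ 2 / (2 * C)) with hε
    have hε0 : 0 < ε := lt_min one_pos (div_pos hw0 (by linarith))
    have hε1 : ε ≤ 1 := min_le_left _ _
    set A : ℝ := maxd + ε with hA
    set B : ℝ := max (maxd + 2) (d (Fin.last (p+1)) + W + 1) with hB
    have hAB : A ≤ B := by
      have : A ≤ maxd + 2 := by simp only [hA]; linarith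
      exact this.trans (le_max_left _ _)
    have hAltd : ∀ j : Fin (p+1), d j.castSucc < A := fun j =>
      lt_of_le_of_lt (hle j) (by simp only [hA]; linarith)
    -- f A < 0
    have hfA : f A < 0 := by
      have hterm : w j0 ^ 2 / ε ≤ ∑ j, w j ^ 2 / (A - d j.castSucc) := by
        have : w j0 ^ 2 / (A - d j0.castSucc) = w j0 ^ 2 / ε := by
          rw [← hj0]; congr 1; simp only [hA]; ring
        rw [← this]
        refine Finset.single_le_sum (f := fun j => w j ^ 2 / (A - d j.castSucc))
          (fun j _ => div_nonneg (sq_nonneg _) (by linarith [hAltd j])) (Finset.mem_univ j0)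
      have h2C : 2 * C ≤ w j0 ^ 2 / ε := by
        have hεle : ε ≤ w j0 ^ 2 / (2 * C) := min_le_right _ _
        rw [le_div_iff₀ hε0]
        calc 2 * C * ε ≤ 2 * C * (w j0 ^ 2 / (2 * C)) := by
              apply mul_le_mul_of_nonneg_left hεle (by linarith)
          _ = w j0 ^ 2 := by field_simp
      have hAC : A - d (Fin.last (p+1)) ≤ C := by
        have : maxd + 1 - d (Fin.last (p+1)) ≤ C := le_max_left _ _
        simp only [hA]; linarith
      simp only [hf]
      have : ∑ j, w j ^ 2 / (A - d j.castSucc) ≥ 2 * C := le_trans h2C hterm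
      linarith
    -- f B > 0
    have hfB : 0 < f B := by
      have hB2 : maxd + 2 ≤ B := le_max_left _ _
      have hBW : d (Fin.last (p+1)) + W + 1 ≤ B := le_max_right _ _
      have hsum : ∑ j, w j ^ 2 / (B - d j.castSucc) ≤ W := by
        rw [hW]
        refine Finset.sum_le_sum fun j _ => ?_
        have h1 : (1:ℝ) ≤ B - d j.castSucc := by linarith [hle j]
        calc w j ^ 2 / (B - d j.castSucc) ≤ w j ^ 2 / 1 :=
              div_le_div_of_nonneg_left (sq_nonneg _) one_pos h1
          _ = w j ^ 2 := by ring
      simp only [hf]; linarith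
    -- continuity
    have hcont : ContinuousOn f (Set.Icc A B) := by
      apply ContinuousOn.sub
      · exact (continuousOn_id.sub continuousOn_const)
      · apply continuousOn_finset_sum
        intro j _
        apply ContinuousOn.div continuousOn_const (continuousOn_id.sub continuousOn_const)
        intro μ hμ
        have := hAltd j
        have : d j.castSucc < μ := lt_of_lt_of_le this hμ.1
        simpa using sub_ne_zero.2 (ne_of_gt this)
    obtain ⟨ξ, hξmem, hξ⟩ := intermediate_value_Icc hAB hcont
      (Set.mem_Icc.2 ⟨le_of_lt hfA, le_of_lt hfB⟩)
    refine ⟨ξ, fun j => lt_of_lt_of_le (hAltd j) hξmem.1, ?_⟩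
    simpa only [hf] using hξ

/-- Row equations for an eigen-equation of a real-data arrow matrix. -/
lemma arrow_rows {n : ℕ} (d : Fin (n + 1) → ℝ) (w : Fin n → ℝ) (μ : ℂ)
    (v : Fin (n + 1) → ℂ)
    (hv : (arrow (fun i => ((d i : ℝ) : ℂ)) (fun j => ((w j : ℝ) : ℂ))
      (fun j => ((w j : ℝ) : ℂ))).mulVec v = μ • v) :
    (∀ j : Fin n, ((d j.castSucc : ℝ) : ℂ) * v j.castSucc + ((w j : ℝ) : ℂ) * v (Fin.last n)
        = μ * v j.castSucc) ∧
    (∑ j : Fin n, ((w j : ℝ) : ℂ) * v j.castSucc)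
        + ((d (Fin.last n) : ℝ) : ℂ) * v (Fin.last n) = μ * v (Fin.last n) := by
  constructor
  · intro j
    have := congrFun hv j.castSucc
    rwa [arrow_mulVec_castSucc] at this
  · have := congrFun hv (Fin.last n)
    rwa [arrow_mulVec_last] at this

/-- Coordinate formula for eigenvectors at eigenvalues above the leading diagonal. -/
lemma arrow_coord {n : ℕ} (d : Fin (n + 1) → ℝ) (w : Fin n → ℝ) (μ : ℝ)
    (hμ : ∀ j : Fin n, d j.castSucc < μ) (v : Fin (n + 1) → ℂ)
    (hv : (arrow (fun i => ((d i : ℝ) : ℂ)) (fun j => ((w j : ℝ) : ℂ))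
      (fun j => ((w j : ℝ) : ℂ))).mulVec v = (μ : ℂ) • v) (j : Fin n) :
    v j.castSucc = ((w j / (μ - d j.castSucc) : ℝ) : ℂ) * v (Fin.last n) := by
  have hrow := (arrow_rows d w (μ : ℂ) v hv).1 j
  have hne : (μ - d j.castSucc : ℝ) ≠ 0 := ne_of_gt (sub_pos.2 (hμ j))
  have hneC : ((μ - d j.castSucc : ℝ) : ℂ) ≠ 0 := by exact_mod_cast hne
  have hneC' : ((μ : ℂ) - ((d j.castSucc : ℝ) : ℂ)) ≠ 0 := by push_cast at hneC; exact hneC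
  push_cast
  rw [div_mul_eq_mul_div, eq_div_iff hneC']
  linear_combination -hrow

/-- for H real diagonal and K a Hermitian arrowhead matrix with
positive arm entries (and distinct leading diagonal entries), for every t > 0
the top eigenvalue of H + tK strictly dominates the leading diagonal entries,
is simple, and has an eigenvector with all coordinates strictly positive. -/
theorem stmt6 {n : ℕ} (h k : Fin (n + 1) → ℝ) (m : Fin n → ℝ)
    (hm : ∀ j, 0 < m j)
    (hkdist : ∀ i j : Fin n, i ≠ j → k i.castSucc ≠ k j.castSucc)
    (M : ℝ → Matrix (Fin (n + 1)) (Fin (n + 1)) ℂ)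
    (hM : ∀ t, M t = arrow (fun i => ((h i + t * k i : ℝ) : ℂ))
      (fun j => ((t * m j : ℝ) : ℂ)) (fun j => ((t * m j : ℝ) : ℂ))) :
    ∀ t : ℝ, 0 < t →
      ∃ ξ : ℝ, IsGreatest {r : ℝ | (r : ℂ) ∈ eigs (M t)} ξ ∧
        (∀ j : Fin n, h j.castSucc + t * k j.castSucc < ξ) ∧
        ∃ x : Fin (n + 1) → ℝ, (∀ i, 0 < x i) ∧
          (M t).mulVec (fun i => (x i : ℂ)) = (ξ : ℂ) • (fun i => (x i : ℂ)) ∧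
          ∀ v : Fin (n + 1) → ℂ, (M t).mulVec v = (ξ : ℂ) • v →
            ∃ cc : ℂ, v = cc • (fun i => (x i : ℂ)) := by
  intro t ht
  -- the real data
  set d : Fin (n + 1) → ℝ := fun i => h i + t * k i with hd
  set w : Fin n → ℝ := fun j => t * m j with hwdef
  have hw : ∀ j, 0 < w j := fun j => mul_pos ht (hm j)
  have hMt : M t = arrow (fun i => ((d i : ℝ) : ℂ)) (fun j => ((w j : ℝ) : ℂ))
      (fun j => ((w j : ℝ) : ℂ)) := hM t
  obtain ⟨ξ, hlt, hroot⟩ := secular_exists d w hw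
  have hnz : ∀ j : Fin n, (ξ - d j.castSucc) ≠ 0 := fun j => ne_of_gt (sub_pos.2 (hlt j))
  -- the positive eigenvector
  set x : Fin (n + 1) → ℝ := fun i =>
    if hi : i = Fin.last n then 1 else w (i.castPred hi) / (ξ - d i) with hx
  have hxlast : x (Fin.last n) = 1 := by simp [hx]
  have hxcs : ∀ j : Fin n, x j.castSucc = w j / (ξ - d j.castSucc) := by
    intro j
    simp [hx, (Fin.castSucc_lt_last j).ne, Fin.castPred_castSucc]
  have hxpos : ∀ i, 0 < x i := by
    intro i
    rcases eq_or_ne i (Fin.last n) with hi | hi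
    · subst hi; rw [hxlast]; exact one_pos
    · have hcs : (i.castPred hi).castSucc = i := Fin.castSucc_castPred i hi
      have : x i = w (i.castPred hi) / (ξ - d i) := by simp [hx, hi]
      rw [this]
      refine div_pos (hw _) ?_
      have := hlt (i.castPred hi)
      rw [hcs] at this
      linarith
  -- the eigen-equation for x
  have heig : (M t).mulVec (fun i => ((x i : ℝ) : ℂ)) = (ξ : ℂ) • (fun i => ((x i : ℝ) : ℂ)) := by
    rw [hMt]
    funext i
    rcases eq_or_ne i (Fin.last n) with hi | hi
    · subst hi
      rw [arrow_mulVec_last]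
      have hreal : (∑ j : Fin n, w j * x j.castSucc) + d (Fin.last n) * x (Fin.last n)
          = ξ * x (Fin.last n) := by
        have hsum : ∑ j : Fin n, w j * x j.castSucc
            = ∑ j : Fin n, w j ^ 2 / (ξ - d j.castSucc) := by
          refine Finset.sum_congr rfl fun j _ => ?_
          rw [hxcs j]; rw [sq]; ring
        rw [hsum, hxlast]
        linarith
      show (∑ j : Fin n, ((w j : ℝ) : ℂ) * ((x j.castSucc : ℝ) : ℂ))
          + ((d (Fin.last n) : ℝ) : ℂ) * ((x (Fin.last n) : ℝ) : ℂ)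
          = ((ξ : ℝ) : ℂ) * ((x (Fin.last n) : ℝ) : ℂ)
      exact_mod_cast hreal
    · have hcs : (i.castPred hi).castSucc = i := Fin.castSucc_castPred i hi
      rw [← hcs, arrow_mulVec_castSucc]
      set j := i.castPred hi
      have hreal : d j.castSucc * x j.castSucc + w j * x (Fin.last n) = ξ * x j.castSucc := by
        have hne := hnz j
        rw [hxcs j, hxlast]
        field_simp
        ring
      show ((d j.castSucc : ℝ) : ℂ) * ((x j.castSucc : ℝ) : ℂ)
          + ((w j : ℝ) : ℂ) * ((x (Fin.last n) : ℝ) : ℂ)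
          = ((ξ : ℝ) : ℂ) * ((x j.castSucc : ℝ) : ℂ)
      exact_mod_cast hreal
  -- x is nonzero as a complex vector
  have hxne : (fun i => ((x i : ℝ) : ℂ)) ≠ 0 := by
    intro hcon
    have := congrFun hcon (Fin.last n)
    rw [hxlast] at this
    simpa using this
  refine ⟨ξ, ⟨⟨(fun i => ((x i : ℝ) : ℂ)), hxne, heig⟩, ?_⟩, ?_, x, hxpos, heig, ?_⟩
  · -- upper bound
    rintro r ⟨v, hv0, hveq⟩
    by_contra hc
    push_neg at hc
    have hltr : ∀ j : Fin n, d j.castSucc < r := fun j => lt_trans (hlt j) hc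
    rw [hMt] at hveq
    obtain ⟨hrow, hlast⟩ := arrow_rows d w (r : ℂ) v hveq
    have hvlast : v (Fin.last n) ≠ 0 := by
      intro h0
      apply hv0
      funext i
      rcases eq_or_ne i (Fin.last n) with hi | hi
      · subst hi; exact h0
      · have hcs : (i.castPred hi).castSucc = i := Fin.castSucc_castPred i hi
        have := arrow_coord d w r hltr v hveq (i.castPred hi)
        rw [hcs, h0, mul_zero] at this
        exact this
    have hvj := arrow_coord d w r hltr v hveq
    have h3 : (∑ j : Fin n, ((w j ^ 2 / (r - d j.castSucc) : ℝ) : ℂ)) * v (Fin.last n)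
        + ((d (Fin.last n) : ℝ) : ℂ) * v (Fin.last n) = (r : ℂ) * v (Fin.last n) := by
      rw [Finset.sum_mul, ← hlast]
      congr 1
      refine Finset.sum_congr rfl fun j _ => ?_
      rw [hvj j]
      have hneC : ((r - d j.castSucc : ℝ) : ℂ) ≠ 0 := by
        exact_mod_cast ne_of_gt (sub_pos.2 (hltr j))
      field_simp
      push_cast
      ring
    have h6 : ((∑ j : Fin n, w j ^ 2 / (r - d j.castSucc) : ℝ) : ℂ)
        + ((d (Fin.last n) : ℝ) : ℂ) = (r : ℂ) := by
      apply mul_right_cancel₀ hvlast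
      rw [add_mul, ← h3]
      congr 1
      push_cast
      rw [Finset.sum_mul]
    have h7 : (∑ j : Fin n, w j ^ 2 / (r - d j.castSucc)) + d (Fin.last n) = r := by
      exact_mod_cast h6
    have := secular_mono d w hlt hc
    rw [hroot] at this
    linarith
  · -- strict dominance
    intro j
    have := hlt j
    simpa [hd] using this
  · -- simplicity
    intro v hveq
    rw [hMt] at hveq
    refine ⟨v (Fin.last n), ?_⟩
    funext i
    rcases eq_or_ne i (Fin.last n) with hi | hi
    · subst hi
      show v (Fin.last n) = v (Fin.last n) * ((x (Fin.last n) : ℝ) : ℂ)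
      rw [hxlast]
      simp
    · have hcs : (i.castPred hi).castSucc = i := Fin.castSucc_castPred i hi
      have := arrow_coord d w ξ hlt v hveq (i.castPred hi)
      rw [hcs] at this
      show v i = v (Fin.last n) * ((x i : ℝ) : ℂ)
      have hxi : ((x i : ℝ) : ℂ)
          = ((w (i.castPred hi) / (ξ - d (i.castPred hi).castSucc) : ℝ) : ℂ) := by
        rw [hcs]; simp [hx, hi]
      rw [this, hxi, mul_comm, hcs]
end
end

section
/- Let A be an n×n arrowhead matrix with pairwise distinct a_1,...,a_{n-1} and |b_j| > |c_j| for all j whose diagonal entry a_j is extremal (lies on the boundary of the convex hull of a_1,...,a_{n-1}), and |b_j| ≥ |c_j| for all other j ≤ n-1. Then for every θ ∈ ℝ, the maximal eigenvalue ξ(θ) of Re(e^{iθ}A) is a simple eigenvalue and satisfies ξ(θ) > Re(a_j e^{iθ}) for all j = 1,...,n-1. -/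
open Matrix Complex

noncomputable section

/-- Re(e^{iθ}A). -/
def reRotP {n : ℕ} (θ : ℝ) (A : Matrix (Fin n) (Fin n) ℂ) :
    Matrix (Fin n) (Fin n) ℂ :=
  (2⁻¹ : ℂ) • (Complex.exp ((θ : ℂ) * Complex.I) • A +
    (Complex.exp ((θ : ℂ) * Complex.I) • A)ᴴ)

/-- If `g j` maximizes the linear functional `w ↦ (e * w).re` (with `|e| = 1`) among the
points `g i`, then `g j` is on the frontier of the convex hull of the range of `g`. -/
lemma frontier_aux {m : ℕ} (g : Fin m → ℂ) (e : ℂ) (he : ‖e‖ = 1)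
    (j : Fin m) (hmax : ∀ i, (e * g i).re ≤ (e * g j).re) :
    g j ∈ frontier (convexHull ℝ (Set.range g)) := by
  have hce : (starRingEnd ℂ) e * e = 1 := by
    rw [Complex.conj_mul']
    norm_cast
    simp [he]
  have hmem : g j ∈ convexHull ℝ (Set.range g) :=
    subset_convexHull ℝ _ (Set.mem_range_self j)
  rw [frontier, Set.mem_diff]
  refine ⟨subset_closure hmem, ?_⟩
  intro hint
  rw [mem_interior_iff_mem_nhds, Metric.mem_nhds_iff] at hint
  obtain ⟨ε, hε, hball⟩ := hint
  have hlin : IsLinearMap ℝ (fun w : ℂ => (e * w).re) := by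
    constructor
    · intro x y; simp [mul_add]
    · intro r x
      simp only [Complex.real_smul, smul_eq_mul]
      push_cast
      ring_nf
      simp [Complex.ext_iff]
      ring
  have hhalf : convexHull ℝ (Set.range g) ⊆ {w : ℂ | (e * w).re ≤ (e * g j).re} := by
    apply convexHull_min _ (convex_halfSpace_le hlin _)
    rintro _ ⟨i, rfl⟩; exact hmax i
  set z : ℂ := g j + ((ε / 2 : ℝ) : ℂ) * (starRingEnd ℂ) e with hz
  have hzball : z ∈ Metric.ball (g j) ε := by
    rw [Metric.mem_ball, dist_eq_norm]
    have hzz : z - g j = ((ε / 2 : ℝ) : ℂ) * (starRingEnd ℂ) e := by rw [hz]; ring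
    rw [hzz, norm_mul]
    simp only [Complex.norm_real, Real.norm_eq_abs, Complex.norm_conj, he, mul_one]
    rw [abs_of_pos (by linarith)]
    linarith
  have hin := hhalf (hball hzball)
  have hre : (e * z).re = (e * g j).re + ε / 2 := by
    have hez : e * z = e * g j + ((ε / 2 : ℝ) : ℂ) := by
      rw [hz, mul_add]
      congr 1
      rw [mul_comm ((ε / 2 : ℝ) : ℂ) _, ← mul_assoc, mul_comm e _, hce, one_mul]
    rw [hez]
    simp
  rw [Set.mem_setOf_eq, hre] at hin
  linarith

set_option maxHeartbeats 1600000 in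
/-- under the "unbalanced arms" hypotheses, for every θ the top
eigenvalue of Re(e^{iθ}A) is simple and strictly exceeds Re(a_j e^{iθ}) for
j = 1,…,n-1. -/
theorem stmt9 {n : ℕ} (a : Fin (n + 1) → ℂ) (b c : Fin n → ℂ)
    (A : Matrix (Fin (n + 1)) (Fin (n + 1)) ℂ) (hA : A = arrow a b c)
    (hdist : ∀ i j : Fin n, i ≠ j → a i.castSucc ≠ a j.castSucc)
    (hge : ∀ j : Fin n, ‖c j‖ ≤ ‖b j‖)
    (hstrict : ∀ j : Fin n,
      a j.castSucc ∈
        frontier (convexHull ℝ (Set.range fun i : Fin n => a i.castSucc)) →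
      ‖c j‖ < ‖b j‖) :
    ∀ θ : ℝ, ∃ ξ : ℝ,
      IsGreatest {r : ℝ | (r : ℂ) ∈ eigs (reRotP θ A)} ξ ∧
      (∀ j : Fin n,
        (a j.castSucc * Complex.exp ((θ : ℂ) * Complex.I)).re < ξ) ∧
      Module.finrank ℂ
        (Module.End.eigenspace (Matrix.toLin' (reRotP θ A)) (ξ : ℂ)) = 1 := by
  intro θ
  set e : ℂ := Complex.exp ((θ : ℂ) * Complex.I) with he_def
  have habs_e : ‖e‖ = 1 := Complex.norm_exp_ofReal_mul_I θ
  set B : Matrix (Fin (n + 1)) (Fin (n + 1)) ℂ := reRotP θ A with hB_def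
  set α : Fin (n + 1) → ℝ := fun i => (e * a i).re with hα_def
  set d : Fin n → ℂ := fun j => (2⁻¹ : ℂ) * (e * b j + (starRingEnd ℂ) (e * c j)) with hd_def
  have hlastne : ∀ j : Fin n, j.castSucc ≠ Fin.last n := fun j => (Fin.castSucc_lt_last j).ne
  -- entry computations
  have hBentry : ∀ i j, B i j =
      (2⁻¹ : ℂ) * (e * A i j + (starRingEnd ℂ) (e * A j i)) := by
    intro i j
    rw [hB_def, reRotP, ← he_def]
    simp [Matrix.add_apply, Matrix.smul_apply, Matrix.conjTranspose_apply, smul_eq_mul, mul_add]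
  have hBdiag : ∀ i, B i i = ((α i : ℝ) : ℂ) := by
    intro i
    rw [hBentry]
    have h : A i i = a i := by simp [hA, arrow]
    rw [h, Complex.add_conj, hα_def]
    push_cast
    ring
  have hAb : ∀ j : Fin n, A j.castSucc (Fin.last n) = b j := by
    intro j
    simp [hA, arrow, hlastne j]
  have hAc : ∀ j : Fin n, A (Fin.last n) j.castSucc = c j := by
    intro j
    simp [hA, arrow, hlastne j, ((hlastne j).symm : Fin.last n ≠ j.castSucc)]
  have harm : ∀ j : Fin n, B j.castSucc (Fin.last n) = d j := by
    intro j
    rw [hBentry, hAb, hAc, hd_def]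
  have harm2 : ∀ j : Fin n, B (Fin.last n) j.castSucc = (starRingEnd ℂ) (d j) := by
    intro j
    rw [hBentry, hAb, hAc, hd_def]
    have h2 : (starRingEnd ℂ) (2⁻¹ : ℂ) = (2⁻¹ : ℂ) := by
      simp [Complex.ext_iff]
    simp only [_root_.map_mul, map_add, Complex.conj_conj, h2]
    ring
  have hoff : ∀ i j : Fin n, i ≠ j → B i.castSucc j.castSucc = 0 := by
    intro i j hij
    rw [hBentry]
    have h1 : A i.castSucc j.castSucc = 0 := by
      simp [hA, arrow, hlastne i, hlastne j, Fin.castSucc_inj, hij]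
    have h2 : A j.castSucc i.castSucc = 0 := by
      simp [hA, arrow, hlastne i, hlastne j, Fin.castSucc_inj, hij.symm]
    rw [h1, h2]
    simp
  -- mulVec formulas
  have hmulc : ∀ (v : Fin (n + 1) → ℂ) (j : Fin n),
      B.mulVec v j.castSucc
        = ((α j.castSucc : ℝ) : ℂ) * v j.castSucc + d j * v (Fin.last n) := by
    intro v j
    have h : B.mulVec v j.castSucc = ∑ k, B j.castSucc k * v k := rfl
    rw [h, Fin.sum_univ_castSucc, Finset.sum_eq_single j]
    · rw [hBdiag, harm]
    · intro k _ hk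
      rw [hoff j k (Ne.symm hk), zero_mul]
    · intro h'; exact absurd (Finset.mem_univ j) h'
  have hmull : ∀ v : Fin (n + 1) → ℂ,
      B.mulVec v (Fin.last n)
        = (∑ k : Fin n, (starRingEnd ℂ) (d k) * v k.castSucc)
          + ((α (Fin.last n) : ℝ) : ℂ) * v (Fin.last n) := by
    intro v
    have h : B.mulVec v (Fin.last n) = ∑ k, B (Fin.last n) k * v k := rfl
    rw [h, Fin.sum_univ_castSucc, hBdiag]
    congr 1
    exact Finset.sum_congr rfl fun k _ => by rw [harm2]
  -- Hermitian
  have hHerm : B.IsHermitian := by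
    show Bᴴ = B
    rw [hB_def, reRotP]
    rw [Matrix.conjTranspose_smul, Matrix.conjTranspose_add, Matrix.conjTranspose_conjTranspose]
    rw [add_comm ((Complex.exp ((θ : ℂ) * Complex.I) • A)ᴴ)]
    congr 1
    simp [Complex.ext_iff]
  have hSym := (Matrix.isHermitian_iff_isSymmetric).mp hHerm
  set T : EuclideanSpace ℂ (Fin (n + 1)) →ₗ[ℂ] EuclideanSpace ℂ (Fin (n + 1)) :=
    Matrix.toEuclideanLin B with hT_def
  haveI : Nontrivial (EuclideanSpace ℂ (Fin (n + 1))) :=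
    inferInstance
  set ξ : ℝ := ⨆ x : { x : EuclideanSpace ℂ (Fin (n + 1)) // x ≠ 0 },
      RCLike.re (inner ℂ (T x) (x : EuclideanSpace ℂ (Fin (n + 1))) : ℂ)
        / ‖(x : EuclideanSpace ℂ (Fin (n + 1)))‖ ^ 2 with hξ_def
  have hEig : Module.End.HasEigenvalue T ((ξ : ℝ) : ℂ) :=
    hSym.hasEigenvalue_iSup_of_finiteDimensional
  -- boundedness of the Rayleigh quotient
  have hbdd : BddAbove (Set.range fun x : { x : EuclideanSpace ℂ (Fin (n + 1)) // x ≠ 0 } =>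
      RCLike.re (inner ℂ (T x) (x : EuclideanSpace ℂ (Fin (n + 1))) : ℂ)
        / ‖(x : EuclideanSpace ℂ (Fin (n + 1)))‖ ^ 2) := by
    refine ⟨‖LinearMap.toContinuousLinearMap T‖, ?_⟩
    rintro r ⟨x, rfl⟩
    have hx : (0 : ℝ) < ‖(x : EuclideanSpace ℂ (Fin (n + 1)))‖ := norm_pos_iff.mpr x.2
    rw [div_le_iff₀ (by positivity)]
    have h1 : RCLike.re (inner ℂ (T x) (x : EuclideanSpace ℂ (Fin (n + 1))) : ℂ)
        ≤ ‖T x‖ * ‖(x : EuclideanSpace ℂ (Fin (n + 1)))‖ :=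
      le_trans (RCLike.re_le_norm _) (norm_inner_le_norm _ _)
    have h2 : ‖T (x : EuclideanSpace ℂ (Fin (n + 1)))‖
        ≤ ‖LinearMap.toContinuousLinearMap T‖ * ‖(x : EuclideanSpace ℂ (Fin (n + 1)))‖ := by
      simpa using (LinearMap.toContinuousLinearMap T).le_opNorm
        (x : EuclideanSpace ℂ (Fin (n + 1)))
    nlinarith [norm_nonneg (T (x : EuclideanSpace ℂ (Fin (n + 1))))]
  -- ξ is an eigenvalue of B
  obtain ⟨v, hv⟩ := hEig.exists_hasEigenvector
  have hveq : T v = ((ξ : ℝ) : ℂ) • v := hv.apply_eq_smul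
  have hmemS : ((ξ : ℝ) : ℂ) ∈ eigs B := by
    refine ⟨fun i => v i, ?_, ?_⟩
    · intro h
      exact hv.2 (by ext i; exact congrFun h i)
    · funext i
      have h := congrArg (fun x => x i) hveq
      simpa [hT_def, Matrix.toEuclideanLin_apply] using h
  -- upper bound
  have hub : ∀ r ∈ {r : ℝ | (r : ℂ) ∈ eigs B}, r ≤ ξ := by
    rintro r ⟨w, hw0, hww⟩
    set x : EuclideanSpace ℂ (Fin (n + 1)) := (WithLp.equiv 2 (Fin (n + 1) → ℂ)).symm w with hx_def
    have hx0 : x ≠ 0 := by simpa [hx_def] using hw0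
    have hTx : T x = ((r : ℝ) : ℂ) • x := by
      ext i
      have h := congrFun hww i
      simpa [hT_def, Matrix.toEuclideanLin_apply, hx_def] using h
    have hnx : (0 : ℝ) < ‖x‖ := norm_pos_iff.mpr hx0
    have hray : RCLike.re (inner ℂ (T x) x : ℂ) / ‖x‖ ^ 2 = r := by
      have hinner2 : (inner ℂ (T x) x : ℂ) = ((r * ‖x‖ ^ 2 : ℝ) : ℂ) := by
        rw [hTx, inner_smul_left, inner_self_eq_norm_sq_to_K, Complex.conj_ofReal]
        push_cast
        rfl
      rw [hinner2, RCLike.re_to_complex, Complex.ofReal_re]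
      field_simp
    rw [← hray]
    exact le_ciSup hbdd ⟨x, hx0⟩
  -- strict inequality
  have hlt : ∀ j : Fin n, α j.castSucc < ξ := by
    intro j
    obtain ⟨jm, -, hjm⟩ := Finset.exists_max_image (Finset.univ : Finset (Fin n))
      (fun k => α k.castSucc) ⟨j, Finset.mem_univ j⟩
    have hjmax : ∀ k : Fin n, α k.castSucc ≤ α jm.castSucc := fun k => hjm k (Finset.mem_univ k)
    refine lt_of_le_of_lt (hjmax j) ?_
    -- d jm ≠ 0
    have hfront : a jm.castSucc ∈
        frontier (convexHull ℝ (Set.range fun i : Fin n => a i.castSucc)) :=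
      frontier_aux (fun i : Fin n => a i.castSucc) e habs_e jm hjmax
    have hbc := hstrict jm hfront
    have hD : d jm ≠ 0 := by
      intro h0
      simp only [hd_def] at h0
      have h2 : e * b jm + (starRingEnd ℂ) (e * c jm) = 0 := by
        linear_combination 2 * h0
      have h1 : ‖e * b jm‖ = ‖(starRingEnd ℂ) (e * c jm)‖ := by
        have h11 : e * b jm = -((starRingEnd ℂ) (e * c jm)) := by linear_combination h2
        rw [h11, norm_neg]
      rw [Complex.norm_conj] at h1
      rw [norm_mul, norm_mul, habs_e, one_mul, one_mul] at h1
      rw [h1] at hbc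
      exact lt_irrefl _ hbc
    set Dr : ℝ := ‖d jm‖ with hDr_def
    have hDrpos : 0 < Dr := by
      rw [hDr_def]
      exact norm_pos_iff.mpr hD
    set u : ℂ := d jm / (Dr : ℂ) with hu_def
    have hDD : (starRingEnd ℂ) (d jm) * d jm = ((Dr ^ 2 : ℝ) : ℂ) := by
      rw [Complex.conj_mul', ← hDr_def]
      push_cast
      ring
    have hDr0 : ((Dr : ℝ) : ℂ) ≠ 0 := by exact_mod_cast hDrpos.ne'
    have hcu : (starRingEnd ℂ) u * u = 1 := by
      rw [hu_def, map_div₀, Complex.conj_ofReal, div_mul_div_comm, hDD]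
      rw [div_eq_one_iff_eq (mul_ne_zero hDr0 hDr0)]
      push_cast
      ring
    have hcDu : (starRingEnd ℂ) (d jm) * u = ((Dr : ℝ) : ℂ) := by
      rw [hu_def, ← mul_div_assoc, hDD]
      rw [div_eq_iff hDr0]
      push_cast
      ring
    have hDcu : d jm * (starRingEnd ℂ) u = ((Dr : ℝ) : ℂ) := by
      have h := congrArg (starRingEnd ℂ) hcDu
      rw [_root_.map_mul, Complex.conj_conj, Complex.conj_ofReal] at h
      linear_combination h
    have hu0 : u ≠ 0 := by
      intro h
      rw [h, mul_zero] at hcu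
      exact zero_ne_one hcu
    set αm : ℝ := α jm.castSucc with hαm_def
    set αL : ℝ := α (Fin.last n) with hαL_def
    set ε : ℝ := Dr / (|αm - αL| + 1) with hε_def
    have hεpos : 0 < ε := by
      rw [hε_def]
      positivity
    set w₀ : Fin (n + 1) → ℂ :=
      fun i => if i = Fin.last n then ((ε : ℝ) : ℂ) else if i = jm.castSucc then u else 0
      with hw₀_def
    have hw₀last : w₀ (Fin.last n) = ((ε : ℝ) : ℂ) := by simp [hw₀_def]
    have hw₀jm : w₀ jm.castSucc = u := by simp [hw₀_def, hlastne jm]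
    have hw₀other : ∀ k : Fin n, k ≠ jm → w₀ k.castSucc = 0 := by
      intro k hk
      simp [hw₀_def, hlastne k, Fin.castSucc_inj, hk]
    set x₀ : EuclideanSpace ℂ (Fin (n + 1)) := (WithLp.equiv 2 (Fin (n + 1) → ℂ)).symm w₀
      with hx₀_def
    have hx₀app : ∀ i, (x₀ : EuclideanSpace ℂ (Fin (n + 1))) i = w₀ i := fun i => rfl
    have hw₀0 : w₀ ≠ 0 := by
      intro h
      apply hu0
      rw [← hw₀jm, h]
      rfl
    have hx₀0 : x₀ ≠ 0 := by
      rw [hx₀_def]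
      simpa using hw₀0
    have hTx₀ : ∀ i, (T x₀) i = B.mulVec w₀ i := fun i => rfl
    have hinner : (inner ℂ (T x₀) x₀ : ℂ) = ((αm + 2 * ε * Dr + αL * ε ^ 2 : ℝ) : ℂ) := by
      rw [PiLp.inner_apply]
      simp only [RCLike.inner_apply']
      rw [Fin.sum_univ_castSucc]
      rw [Finset.sum_eq_single jm]
      · rw [hx₀app, hx₀app, hw₀jm, hw₀last, hTx₀, hTx₀, hmulc, hmull, hw₀jm, hw₀last]
        rw [Finset.sum_eq_single jm]
        · rw [hw₀jm, hcDu]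
          simp only [map_add, _root_.map_mul, Complex.conj_ofReal, Complex.conj_conj]
          push_cast
          have hDcu' : d jm * (starRingEnd ℂ) u = ((Dr : ℝ) : ℂ) := hDcu
          have hcDu' : (starRingEnd ℂ) (d jm) * u = ((Dr : ℝ) : ℂ) := hcDu
          have hcu' : (starRingEnd ℂ) u * u = 1 := hcu
          linear_combination (αm : ℂ) * hcu' + (ε : ℂ) * hcDu'
        · intro k _ hk
          rw [hw₀other k hk, mul_zero]
        · intro h'; exact absurd (Finset.mem_univ jm) h'
      · intro k _ hk
        rw [hx₀app, hw₀other k hk, mul_zero]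
      · intro h'; exact absurd (Finset.mem_univ jm) h'
    have hnorm : ‖x₀‖ ^ 2 = 1 + ε ^ 2 := by
      have h1 : (inner ℂ x₀ x₀ : ℂ) = ((1 + ε ^ 2 : ℝ) : ℂ) := by
        rw [PiLp.inner_apply]
        simp only [RCLike.inner_apply']
        rw [Fin.sum_univ_castSucc]
        rw [Finset.sum_eq_single jm]
        · rw [hx₀app, hx₀app, hw₀jm, hw₀last, hcu, Complex.conj_ofReal]
          push_cast
          ring
        · intro k _ hk
          rw [hx₀app, hw₀other k hk, mul_zero]
        · intro h'; exact absurd (Finset.mem_univ jm) h'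
      have h2 : ((‖x₀‖ ^ 2 : ℝ) : ℂ) = (inner ℂ x₀ x₀ : ℂ) := by
        rw [inner_self_eq_norm_sq_to_K]
        norm_cast
      rw [h1] at h2
      exact_mod_cast h2
    have hray : RCLike.re (inner ℂ (T x₀) x₀ : ℂ) / ‖x₀‖ ^ 2
        = (αm + 2 * ε * Dr + αL * ε ^ 2) / (1 + ε ^ 2) := by
      rw [hinner, hnorm, RCLike.re_to_complex, Complex.ofReal_re]
    have hgt : αm < (αm + 2 * ε * Dr + αL * ε ^ 2) / (1 + ε ^ 2) := by
      rw [lt_div_iff₀ (by positivity)]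
      have h1 : (αm - αL) * ε ≤ |αm - αL| * ε :=
        mul_le_mul_of_nonneg_right (le_abs_self _) hεpos.le
      have h2 : ε * (|αm - αL| + 1) = Dr := by
        rw [hε_def]
        exact div_mul_cancel₀ _ (by positivity : (0:ℝ) < |αm - αL| + 1).ne'
      nlinarith [hεpos, hDrpos, abs_nonneg (αm - αL)]
    calc αm < (αm + 2 * ε * Dr + αL * ε ^ 2) / (1 + ε ^ 2) := hgt
      _ = RCLike.re (inner ℂ (T x₀) x₀ : ℂ) / ‖x₀‖ ^ 2 := hray.symm
      _ ≤ ξ := le_ciSup hbdd ⟨x₀, hx₀0⟩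
  -- simplicity
  have hsimple : Module.finrank ℂ
      (Module.End.eigenspace (Matrix.toLin' B) ((ξ : ℝ) : ℂ)) = 1 := by
    set Es := Module.End.eigenspace (Matrix.toLin' B) ((ξ : ℝ) : ℂ) with hEs_def
    have hmemE : ∀ u : Fin (n + 1) → ℂ, u ∈ Es ↔ B.mulVec u = ((ξ : ℝ) : ℂ) • u := by
      intro u
      rw [hEs_def, Module.End.mem_eigenspace_iff, Matrix.toLin'_apply]
    obtain ⟨w0, hw00, hw0e⟩ := hmemS
    have hinj : Function.Injective
        ((LinearMap.proj (Fin.last n) : (Fin (n + 1) → ℂ) →ₗ[ℂ] ℂ).comp Es.subtype) := by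
      rw [← LinearMap.ker_eq_bot, eq_bot_iff]
      rintro ⟨x, hx⟩ hker
      have hxlast : x (Fin.last n) = 0 := hker
      have hxeig : B.mulVec x = ((ξ : ℝ) : ℂ) • x := (hmemE x).mp hx
      have hzero : ∀ k : Fin n, x k.castSucc = 0 := by
        intro k
        have h1 := congrFun hxeig k.castSucc
        rw [hmulc, hxlast, mul_zero, add_zero] at h1
        have h2 : ((α k.castSucc : ℝ) : ℂ) * x k.castSucc = ((ξ : ℝ) : ℂ) * x k.castSucc := by
          simpa using h1
        by_contra hne
        have h3 := mul_right_cancel₀ hne h2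
        have h4 : α k.castSucc = ξ := by exact_mod_cast h3
        exact absurd h4 (ne_of_lt (hlt k))
      have hx0 : x = 0 := by
        funext i
        refine Fin.lastCases ?_ ?_ i
        · exact hxlast
        · exact hzero
      simp only [Submodule.mem_bot]
      exact Subtype.ext hx0
    have hle : Module.finrank ℂ Es ≤ 1 := by
      have h := LinearMap.finrank_le_finrank_of_injective hinj
      simpa using h
    have hge1 : 1 ≤ Module.finrank ℂ Es := by
      haveI hnt : Nontrivial Es := Submodule.nontrivial_iff_ne_bot.mpr
        ((Submodule.ne_bot_iff _).mpr ⟨w0, (hmemE w0).mpr hw0e, hw00⟩)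
      exact Module.finrank_pos_iff.mpr hnt
    omega
  refine ⟨ξ, ⟨hmemS, hub⟩, ?_, hsimple⟩
  intro j
  have h := hlt j
  simp only [hα_def] at h
  rw [mul_comm] at h
  exact h
end
end

section
/- Let K be the Hermitian matrix [[K₁, Σ],[Σ, K₂]] where K₁, K₂ are 2×2 Hermitian and Σ = diag[σ₁, σ₂] with σ₁ = σ₂ > 0. If K₁ and K₂ do not commute, then the matrix A = H + iK, where H = diag[h₁,h₁,h₂,h₂] with h₁ ≠ h₂, has no 2-dimensional subspace of ℂ⁴ that is invariant under both A and A*. -/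
open Matrix Complex

noncomputable section

lemma herm_comm (M N : Matrix (Fin 2) (Fin 2) ℂ) (hM : Mᴴ = M) (hN : Nᴴ = N)
    (x : Fin 2 → ℂ) (hx : x ≠ 0) (a b : ℂ)
    (hMx : M.mulVec x = a • x) (hNx : N.mulVec x = b • x) : M * N = N * M := by
  set c := starRingEnd ℂ
  have cc : ∀ z : ℂ, c (c z) = z := fun z => Complex.conj_conj z
  set y : Fin 2 → ℂ := ![-(c (x 1)), c (x 0)] with hy
  have key : ∀ (M : Matrix (Fin 2) (Fin 2) ℂ) (a : ℂ), Mᴴ = M → M.mulVec x = a • x →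
      M.mulVec y = (M 0 0 + M 1 1 - c a) • y := by
    intro M a hM hMx
    have e10 : c (M 0 1) = M 1 0 := by
      have := congrFun (congrFun hM 1) 0
      simpa [Matrix.conjTranspose_apply] using this
    have e00 : c (M 0 0) = M 0 0 := by
      have := congrFun (congrFun hM 0) 0
      simpa [Matrix.conjTranspose_apply] using this
    have e11 : c (M 1 1) = M 1 1 := by
      have := congrFun (congrFun hM 1) 1
      simpa [Matrix.conjTranspose_apply] using this
    have h0 := congrFun hMx 0
    have h1 := congrFun hMx 1
    simp [Matrix.mulVec, dotProduct, Fin.sum_univ_two] at h0 h1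
    rw [← e10] at h1
    have c0 := congrArg c h0
    have c1 := congrArg c h1
    simp only [map_add, _root_.map_mul, e00, e11, cc] at c0 c1
    rw [e10] at c0
    funext i
    fin_cases i <;> simp [Matrix.mulVec, dotProduct, Fin.sum_univ_two, hy]
    · linear_combination c1
    · linear_combination -c0
  have hMy := key M a hM hMx
  have hNy := key N b hN hNx
  set P : Matrix (Fin 2) (Fin 2) ℂ := Matrix.of ![![x 0, y 0], ![x 1, y 1]] with hP
  have col : ∀ (M : Matrix (Fin 2) (Fin 2) ℂ) (a a' : ℂ), M.mulVec x = a • x →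
      M.mulVec y = a' • y → M * P = P * Matrix.diagonal ![a, a'] := by
    intro M a a' hx' hy'
    have h0 := congrFun hx' 0
    have h1 := congrFun hx' 1
    have g0 := congrFun hy' 0
    have g1 := congrFun hy' 1
    simp [Matrix.mulVec, dotProduct, Fin.sum_univ_two] at h0 h1 g0 g1
    ext i j
    fin_cases i <;> fin_cases j <;>
      simp [Matrix.mul_apply, Fin.sum_univ_two, hP, Matrix.diagonal] <;>
      [linear_combination h0; linear_combination g0; linear_combination h1; linear_combination g1]
  have hdet : IsUnit P.det := by
    have hd : P.det = x 0 * c (x 0) + x 1 * c (x 1) := by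
      simp [Matrix.det_fin_two, hP, hy]; ring
    rw [isUnit_iff_ne_zero, hd]
    intro hcon
    rw [Complex.mul_conj, Complex.mul_conj, ← Complex.ofReal_add] at hcon
    norm_cast at hcon
    have q0 : Complex.normSq (x 0) = 0 := by
      nlinarith [Complex.normSq_nonneg (x 0), Complex.normSq_nonneg (x 1)]
    have q1 : Complex.normSq (x 1) = 0 := by
      nlinarith [Complex.normSq_nonneg (x 0), Complex.normSq_nonneg (x 1)]
    apply hx
    funext i
    fin_cases i <;> simp [Complex.normSq_eq_zero.mp q0, Complex.normSq_eq_zero.mp q1]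
  have hMP := col M a (M 0 0 + M 1 1 - c a) hMx hMy
  have hNP := col N b (N 0 0 + N 1 1 - c b) hNx hNy
  set dM : Fin 2 → ℂ := ![a, M 0 0 + M 1 1 - c a]
  set dN : Fin 2 → ℂ := ![b, N 0 0 + N 1 1 - c b]
  have hcomm2 : (fun i => dM i * dN i) = fun i => dN i * dM i :=
    funext fun i => mul_comm _ _
  have hkey : (M * N) * P = (N * M) * P := by
    calc (M * N) * P = M * (N * P) := by rw [Matrix.mul_assoc]
    _ = (M * P) * Matrix.diagonal dN := by rw [hNP, Matrix.mul_assoc]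
    _ = P * (Matrix.diagonal dM * Matrix.diagonal dN) := by rw [hMP, Matrix.mul_assoc]
    _ = P * (Matrix.diagonal dN * Matrix.diagonal dM) := by
          rw [Matrix.diagonal_mul_diagonal, Matrix.diagonal_mul_diagonal, hcomm2]
    _ = (N * P) * Matrix.diagonal dM := by rw [hNP, Matrix.mul_assoc]
    _ = (N * M) * P := by rw [Matrix.mul_assoc N M P, hMP, Matrix.mul_assoc]
  calc M * N = (M * N) * P * P⁻¹ := by rw [Matrix.mul_nonsing_inv_cancel_right _ _ hdet]
  _ = (N * M) * P * P⁻¹ := by rw [hkey]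
  _ = N * M := by rw [Matrix.mul_nonsing_inv_cancel_right _ _ hdet]


/-- for H = diag[h₁,h₁,h₂,h₂] (h₁ ≠ h₂) and
K = [[K₁, σI],[σI, K₂]] with σ > 0 and K₁, K₂ non-commuting 2×2 Hermitian
blocks, the matrix A = H + iK has no 2-dimensional reducing subspace. -/
theorem stmt11 (h₁ h₂ : ℝ) (hne : h₁ ≠ h₂) (σ : ℝ) (hσ : 0 < σ)
    (K₁ K₂ : Matrix (Fin 2) (Fin 2) ℂ)
    (hK₁ : K₁ᴴ = K₁) (hK₂ : K₂ᴴ = K₂)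
    (hcomm : K₁ * K₂ ≠ K₂ * K₁)
    (H K A : Matrix (Fin 4) (Fin 4) ℂ)
    (hH : H = Matrix.diagonal ![(h₁ : ℂ), (h₁ : ℂ), (h₂ : ℂ), (h₂ : ℂ)])
    (hK : K = Matrix.reindex finSumFinEquiv finSumFinEquiv
      (Matrix.fromBlocks K₁ ((σ : ℂ) • 1) ((σ : ℂ) • 1) K₂))
    (hA : A = H + Complex.I • K) :
    ¬∃ L : Submodule ℂ (Fin 4 → ℂ), Module.finrank ℂ L = 2 ∧
      (∀ v ∈ L, A.mulVec v ∈ L) ∧ (∀ v ∈ L, Aᴴ.mulVec v ∈ L) := by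
  rintro ⟨L, hdim, hAL, hAsL⟩
  have hσ0 : (σ : ℂ) ≠ 0 := by exact_mod_cast hσ.ne'
  have hd0 : (h₁ : ℂ) - (h₂ : ℂ) ≠ 0 := by
    intro h; apply hne; exact_mod_cast sub_eq_zero.mp h
  -- conjugate transpose of A
  have hHc : Hᴴ = H := by
    have hs : star ![(h₁:ℂ), (h₁:ℂ), (h₂:ℂ), (h₂:ℂ)] = ![(h₁:ℂ), (h₁:ℂ), (h₂:ℂ), (h₂:ℂ)] := by
      funext i; fin_cases i <;> simp [Complex.conj_ofReal]
    rw [hH, Matrix.diagonal_conjTranspose, hs]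
  have hKc : Kᴴ = K := by
    have hs : ((σ:ℂ) • (1 : Matrix (Fin 2) (Fin 2) ℂ))ᴴ = (σ:ℂ) • 1 := by
      rw [Matrix.conjTranspose_smul, Matrix.conjTranspose_one]
      simp [Complex.star_def, Complex.conj_ofReal]
    rw [hK, Matrix.conjTranspose_reindex, Matrix.fromBlocks_conjTranspose, hK₁, hK₂, hs]
  have hAc : Aᴴ = H - Complex.I • K := by
    rw [hA, Matrix.conjTranspose_add, Matrix.conjTranspose_smul, hHc, hKc]
    simp [Complex.star_def, Complex.conj_I, neg_smul, sub_eq_add_neg]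
  -- L is invariant under H and K
  have hHL : ∀ v ∈ L, H.mulVec v ∈ L := by
    intro v hv
    have h2 : A + Aᴴ = (2:ℂ) • H := by rw [hAc, hA]; module
    have : H.mulVec v = (2:ℂ)⁻¹ • (A.mulVec v + Aᴴ.mulVec v) := by
      rw [← Matrix.add_mulVec, h2, Matrix.smul_mulVec, smul_smul]
      norm_num
    rw [this]
    exact L.smul_mem _ (L.add_mem (hAL v hv) (hAsL v hv))
  have hKL : ∀ v ∈ L, K.mulVec v ∈ L := by
    intro v hv
    have h2 : A - Aᴴ = (2 * Complex.I) • K := by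
      rw [hAc, hA]
      have : (2 * Complex.I) • K = (2:ℂ) • Complex.I • K := by rw [smul_smul]
      rw [this]; module
    have h2I : (2 * Complex.I) ≠ 0 := by simp [Complex.I_ne_zero]
    have : K.mulVec v = (2 * Complex.I)⁻¹ • (A.mulVec v - Aᴴ.mulVec v) := by
      rw [← Matrix.sub_mulVec, h2, Matrix.smul_mulVec, smul_smul,
        inv_mul_cancel₀ h2I, one_smul]
    rw [this]
    exact L.smul_mem _ (L.sub_mem (hAL v hv) (hAsL v hv))
  -- explicit action formulas
  have hHform : ∀ v : Fin 4 → ℂ, H.mulVec v = ![h₁ * v 0, h₁ * v 1, h₂ * v 2, h₂ * v 3] := by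
    intro v; rw [hH]; funext i
    fin_cases i <;> simp [Matrix.mulVec, dotProduct, Fin.sum_univ_four, Matrix.diagonal]
  have e0 : (finSumFinEquiv.symm (0 : Fin (2+2))) = Sum.inl (0 : Fin 2) := by decide
  have e1 : (finSumFinEquiv.symm (1 : Fin (2+2))) = Sum.inl (1 : Fin 2) := by decide
  have e2 : (finSumFinEquiv.symm (2 : Fin (2+2))) = Sum.inr (0 : Fin 2) := by decide
  have e3 : (finSumFinEquiv.symm (3 : Fin (2+2))) = Sum.inr (1 : Fin 2) := by decide
  have hKf1 : ∀ x : Fin 2 → ℂ, K.mulVec ![x 0, x 1, 0, 0]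
      = ![K₁.mulVec x 0, K₁.mulVec x 1, σ * x 0, σ * x 1] := by
    intro x; rw [hK]; funext i
    fin_cases i <;>
      simp [Matrix.mulVec, dotProduct, Fin.sum_univ_four, Matrix.reindex_apply,
        Matrix.submatrix_apply, e0, e1, e2, e3, Matrix.fromBlocks, Fin.sum_univ_two,
        Matrix.one_apply]
  have hKf2 : ∀ x : Fin 2 → ℂ, K.mulVec ![0, 0, x 0, x 1]
      = ![σ * x 0, σ * x 1, K₂.mulVec x 0, K₂.mulVec x 1] := by
    intro x; rw [hK]; funext i
    fin_cases i <;>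
      simp [Matrix.mulVec, dotProduct, Fin.sum_univ_four, Matrix.reindex_apply,
        Matrix.submatrix_apply, e0, e1, e2, e3, Matrix.fromBlocks, Fin.sum_univ_two,
        Matrix.one_apply]
  -- block projections stay in L
  have hp1 : ∀ v ∈ L, (![v 0, v 1, 0, 0] : Fin 4 → ℂ) ∈ L := by
    intro v hv
    have hmul : ((h₁:ℂ) - h₂) • (![v 0, v 1, 0, 0] : Fin 4 → ℂ)
        = H.mulVec v - (h₂:ℂ) • v := by
      rw [hHform]
      have s1 : (Fin.succ 0 : Fin 4) = 1 := rfl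
      have s2 : (Fin.succ 1 : Fin 4) = 2 := rfl
      have s3 : (Fin.succ 2 : Fin 4) = 3 := rfl
      funext i
      fin_cases i
      all_goals simp [Matrix.vecHead, Matrix.vecTail, Pi.smul_apply, smul_eq_mul, s1, s2, s3]
      all_goals ring
    have heq : (![v 0, v 1, 0, 0] : Fin 4 → ℂ)
        = ((h₁:ℂ) - h₂)⁻¹ • (H.mulVec v - (h₂:ℂ) • v) := by
      rw [← hmul, inv_smul_smul₀ hd0]
    rw [heq]
    exact L.smul_mem _ (L.sub_mem (hHL v hv) (L.smul_mem _ hv))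
  have hp2 : ∀ v ∈ L, (![0, 0, v 2, v 3] : Fin 4 → ℂ) ∈ L := by
    intro v hv
    have heq : (![0, 0, v 2, v 3] : Fin 4 → ℂ) = v - ![v 0, v 1, 0, 0] := by
      funext i; fin_cases i <;> simp
    rw [heq]
    exact L.sub_mem hv (hp1 v hv)
  -- the two block subspaces
  let f1 : (Fin 2 → ℂ) →ₗ[ℂ] (Fin 4 → ℂ) :=
    { toFun := fun x => ![x 0, x 1, 0, 0]
      map_add' := by intro x y; funext i; fin_cases i <;> simp
      map_smul' := by intro r x; funext i; fin_cases i <;> simp }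
  let f2 : (Fin 2 → ℂ) →ₗ[ℂ] (Fin 4 → ℂ) :=
    { toFun := fun x => ![0, 0, x 0, x 1]
      map_add' := by intro x y; funext i; fin_cases i <;> simp
      map_smul' := by intro r x; funext i; fin_cases i <;> simp }
  have hf1 : ∀ x : Fin 2 → ℂ, f1 x = ![x 0, x 1, 0, 0] := fun _ => rfl
  have hf2 : ∀ x : Fin 2 → ℂ, f2 x = ![0, 0, x 0, x 1] := fun _ => rfl
  set S₁ : Submodule ℂ (Fin 2 → ℂ) := L.comap f1 with hS₁
  set S₂ : Submodule ℂ (Fin 2 → ℂ) := L.comap f2 with hS₂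
  have hmem1 : ∀ x, x ∈ S₁ ↔ (![x 0, x 1, 0, 0] : Fin 4 → ℂ) ∈ L := fun x => Iff.rfl
  have hmem2 : ∀ x, x ∈ S₂ ↔ (![0, 0, x 0, x 1] : Fin 4 → ℂ) ∈ L := fun x => Iff.rfl
  -- invariance transfers
  have step1 : ∀ x ∈ S₁, K₁.mulVec x ∈ S₁ ∧ x ∈ S₂ := by
    intro x hx
    have hw : K.mulVec ![x 0, x 1, 0, 0] ∈ L := hKL _ ((hmem1 x).mp hx)
    rw [hKf1] at hw
    constructor
    · rw [hmem1]
      have := hp1 _ hw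
      simpa using this
    · have h2 := hp2 _ hw
      simp only [Matrix.cons_val_two, Matrix.cons_val_three] at h2
      have hσx : ((σ:ℂ) • x) ∈ S₂ := by
        rw [hmem2]
        have heq : (![0, 0, ((σ:ℂ) • x) 0, ((σ:ℂ) • x) 1] : Fin 4 → ℂ)
            = ![0, 0, σ * x 0, σ * x 1] := by
          funext i; fin_cases i <;> simp
        rw [heq]
        simpa using h2
      have := S₂.smul_mem ((σ:ℂ))⁻¹ hσx
      rwa [smul_smul, inv_mul_cancel₀ hσ0, one_smul] at this
  have step2 : ∀ x ∈ S₂, K₂.mulVec x ∈ S₂ ∧ x ∈ S₁ := by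
    intro x hx
    have hw : K.mulVec ![0, 0, x 0, x 1] ∈ L := hKL _ ((hmem2 x).mp hx)
    rw [hKf2] at hw
    constructor
    · rw [hmem2]
      have := hp2 _ hw
      simpa using this
    · have h2 := hp1 _ hw
      have hσx : ((σ:ℂ) • x) ∈ S₁ := by
        rw [hmem1]
        have heq : (![((σ:ℂ) • x) 0, ((σ:ℂ) • x) 1, 0, 0] : Fin 4 → ℂ)
            = ![σ * x 0, σ * x 1, 0, 0] := by
          funext i; fin_cases i <;> simp
        rw [heq]
        simpa using h2
      have := S₁.smul_mem ((σ:ℂ))⁻¹ hσx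
      rwa [smul_smul, inv_mul_cancel₀ hσ0, one_smul] at this
  have hSeq : S₁ = S₂ := le_antisymm (fun x hx => (step1 x hx).2) (fun x hx => (step2 x hx).2)
  -- decomposition of vectors
  have hdec : ∀ v : Fin 4 → ℂ, v = ![v 0, v 1, 0, 0] + ![0, 0, v 2, v 3] := by
    intro v; funext i; fin_cases i <;> simp
  -- S₁ is nonzero
  have hex : ∃ x, x ∈ S₁ ∧ x ≠ 0 := by
    by_contra hcon
    push_neg at hcon
    have hLbot : L = ⊥ := by
      rw [Submodule.eq_bot_iff]
      intro v hv
      have h1 : (![v 0, v 1] : Fin 2 → ℂ) ∈ S₁ := by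
        rw [hmem1]; simpa using hp1 v hv
      have h2 : (![v 2, v 3] : Fin 2 → ℂ) ∈ S₁ := by
        rw [hSeq, hmem2]; simpa using hp2 v hv
      have z1 := hcon _ h1
      have z2 := hcon _ h2
      funext i
      fin_cases i <;>
        [exact congrFun z1 0; exact congrFun z1 1; exact congrFun z2 0; exact congrFun z2 1]
    rw [hLbot] at hdim
    simp at hdim
  -- finrank S₁ ≤ 1
  have hrk : Module.finrank ℂ S₁ ≤ 1 := by
    by_contra hcon
    push_neg at hcon
    have hle : Module.finrank ℂ S₁ ≤ 2 := by
      have := Submodule.finrank_le S₁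
      simpa [Module.finrank_fin_fun] using this
    have heq2 : Module.finrank ℂ S₁ = 2 := le_antisymm hle hcon
    have hStop : S₁ = ⊤ := by
      apply Submodule.eq_top_of_finrank_eq
      simp [heq2, Module.finrank_fin_fun]
    have hLtop : L = ⊤ := by
      rw [Submodule.eq_top_iff']
      intro v
      have m1 : (![v 0, v 1] : Fin 2 → ℂ) ∈ S₁ := by rw [hStop]; trivial
      have m2 : (![v 2, v 3] : Fin 2 → ℂ) ∈ S₂ := by rw [← hSeq, hStop]; trivial
      rw [hmem1] at m1
      rw [hmem2] at m2
      simp only [Matrix.cons_val_zero, Matrix.cons_val_one, Matrix.head_cons] at m1 m2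
      have := L.add_mem m1 m2
      rwa [← hdec v] at this
    rw [hLtop] at hdim
    simp [Module.finrank_fin_fun] at hdim
  -- extract common eigenvector
  obtain ⟨x, hxS, hxne⟩ := hex
  have hspan : Submodule.span ℂ {x} = S₁ := by
    apply Submodule.eq_of_le_of_finrank_le
    · rw [Submodule.span_le, Set.singleton_subset_iff]; exact hxS
    · rw [finrank_span_singleton hxne]; exact hrk
  have hK1x : K₁.mulVec x ∈ Submodule.span ℂ ({x} : Set (Fin 2 → ℂ)) := by
    rw [hspan]; exact (step1 x hxS).1
  have hK2x : K₂.mulVec x ∈ Submodule.span ℂ ({x} : Set (Fin 2 → ℂ)) := by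
    rw [hspan]
    rw [hSeq]
    exact (step2 x (hSeq ▸ hxS)).1
  obtain ⟨a, ha⟩ := Submodule.mem_span_singleton.mp hK1x
  obtain ⟨b, hb⟩ := Submodule.mem_span_singleton.mp hK2x
  exact hcomm (herm_comm K₁ K₂ hK₁ hK₂ x hxne a b ha.symm hb.symm)
end
end

section
/- Let H = diag[h₁,h₁,h₂,h₂] with h₁ ≠ h₂ real, and K = [[K₁, Σ],[Σ, K₂]] Hermitian with Σ = diag[σ₁, σ₂], σ₁ > σ₂ ≥ 0. Suppose L is a subspace of ℂ⁴ invariant under both H and K. If σ₂ = 0 and the off-diagonal entries (K₁)₁₂ and (K₂)₁₂ are both nonzero, then L = {0} or L = ℂ⁴. -/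
open Matrix Complex

noncomputable section

/-- for H = diag[h₁,h₁,h₂,h₂] (h₁ ≠ h₂) and
K = [[K₁, Σ],[Σ, K₂]] with Σ = diag[σ₁, 0], σ₁ > 0, and both off-diagonal
entries (K₁)₁₂, (K₂)₁₂ nonzero, any subspace invariant under both H and K is
trivial or everything. -/
theorem stmt12 (h₁ h₂ : ℝ) (hne : h₁ ≠ h₂) (σ₁ : ℝ) (hσ : 0 < σ₁)
    (K₁ K₂ : Matrix (Fin 2) (Fin 2) ℂ)
    (hK₁ : K₁ᴴ = K₁) (hK₂ : K₂ᴴ = K₂)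
    (h12 : K₁ 0 1 ≠ 0) (h34 : K₂ 0 1 ≠ 0)
    (H K : Matrix (Fin 4) (Fin 4) ℂ)
    (hH : H = Matrix.diagonal ![(h₁ : ℂ), (h₁ : ℂ), (h₂ : ℂ), (h₂ : ℂ)])
    (hK : K = Matrix.reindex finSumFinEquiv finSumFinEquiv
      (Matrix.fromBlocks K₁ (Matrix.diagonal ![(σ₁ : ℂ), 0])
        (Matrix.diagonal ![(σ₁ : ℂ), 0]) K₂))
    (L : Submodule ℂ (Fin 4 → ℂ))
    (hHL : ∀ v ∈ L, H.mulVec v ∈ L) (hKL : ∀ v ∈ L, K.mulVec v ∈ L) :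
    L = ⊥ ∨ L = ⊤ := by
  classical
  -- explicit form of K
  have hK' : K = !![K₁ 0 0, K₁ 0 1, (σ₁:ℂ), 0;
       K₁ 1 0, K₁ 1 1, 0, 0;
       (σ₁:ℂ), 0, K₂ 0 0, K₂ 0 1;
       0, 0, K₂ 1 0, K₂ 1 1] := by
    rw [hK]
    ext i j
    fin_cases i <;> fin_cases j <;>
      simp [Matrix.fromBlocks, finSumFinEquiv, Fin.addCases, Matrix.diagonal,
        Fin.castLT, Fin.subNat, Sum.elim, Fin.ext_iff] <;> rfl
  have hKmul : ∀ v : Fin 4 → ℂ, K.mulVec v =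
      ![K₁ 0 0 * v 0 + K₁ 0 1 * v 1 + σ₁ * v 2,
        K₁ 1 0 * v 0 + K₁ 1 1 * v 1,
        σ₁ * v 0 + K₂ 0 0 * v 2 + K₂ 0 1 * v 3,
        K₂ 1 0 * v 2 + K₂ 1 1 * v 3] := by
    intro v
    rw [hK']
    funext i
    fin_cases i <;> simp [Matrix.mulVec, dotProduct, Fin.sum_univ_four]
  have hHmul : ∀ v : Fin 4 → ℂ, H.mulVec v =
      ![h₁ * v 0, h₁ * v 1, h₂ * v 2, h₂ * v 3] := by
    intro v
    rw [hH]
    funext i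
    fin_cases i <;> simp [Matrix.mulVec, dotProduct, Fin.sum_univ_four, Matrix.diagonal]
  have hne' : (h₁ : ℂ) - h₂ ≠ 0 := by
    intro h
    apply hne
    have : (h₁ : ℂ) = h₂ := by linear_combination h
    exact_mod_cast this
  have hσ' : (σ₁ : ℂ) ≠ 0 := by
    exact_mod_cast hσ.ne'
  have hK110 : K₁ 1 0 ≠ 0 := by
    have : K₁ 1 0 = star (K₁ 0 1) := by
      rw [← Matrix.conjTranspose_apply, hK₁]
    rw [this]
    simpa using h12
  have hK210 : K₂ 1 0 ≠ 0 := by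
    have : K₂ 1 0 = star (K₂ 0 1) := by
      rw [← Matrix.conjTranspose_apply, hK₂]
    rw [this]
    simpa using h34
  -- extract from a nonzero scalar multiple
  have hsm : ∀ (c : ℂ) (w : Fin 4 → ℂ), c ≠ 0 → c • w ∈ L → w ∈ L := by
    intro c w hc h
    have := L.smul_mem c⁻¹ h
    rwa [smul_smul, inv_mul_cancel₀ hc, one_smul] at this
  -- projections
  have hP1 : ∀ v ∈ L, (![v 0, v 1, 0, 0] : Fin 4 → ℂ) ∈ L := by
    intro v hv
    have hmem : ((h₁:ℂ) - h₂)⁻¹ • (H.mulVec v - (h₂:ℂ) • v) ∈ L :=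
      L.smul_mem _ (L.sub_mem (hHL v hv) (L.smul_mem _ hv))
    have heq : ((h₁:ℂ) - h₂)⁻¹ • (H.mulVec v - (h₂:ℂ) • v) = ![v 0, v 1, 0, 0] := by
      rw [hHmul]
      funext i
      fin_cases i
      all_goals
        simp only [Pi.smul_apply, Pi.sub_apply, Matrix.cons_val_zero, Matrix.cons_val_one,
          Matrix.head_cons, Matrix.cons_val_two, Matrix.tail_cons, Matrix.cons_val_three,
          Matrix.vecHead, Matrix.vecTail, smul_eq_mul, Function.comp_apply]
      all_goals field_simp
      all_goals try ring
      all_goals (simp <;> ring)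
    rwa [heq] at hmem
  have hP2 : ∀ v ∈ L, (![0, 0, v 2, v 3] : Fin 4 → ℂ) ∈ L := by
    intro v hv
    have hmem := L.sub_mem hv (hP1 v hv)
    have heq : v - ![v 0, v 1, 0, 0] = ![0, 0, v 2, v 3] := by
      funext i
      fin_cases i <;> simp
    rwa [heq] at hmem
  -- basis vectors
  set e0 : Fin 4 → ℂ := ![1, 0, 0, 0] with he0d
  set e1 : Fin 4 → ℂ := ![0, 1, 0, 0] with he1d
  set e2 : Fin 4 → ℂ := ![0, 0, 1, 0] with he2d
  set e3 : Fin 4 → ℂ := ![0, 0, 0, 1] with he3d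
  -- step lemmas
  have S1 : e0 ∈ L → e2 ∈ L := by
    intro h0
    have hk := hKL _ h0
    have h2 := hP2 _ hk
    rw [hKmul] at h2
    apply hsm (σ₁ : ℂ) e2 hσ'
    have heq : (![0, 0, (K.mulVec e0) 2, (K.mulVec e0) 3] : Fin 4 → ℂ) = (σ₁:ℂ) • e2 := by
      rw [hKmul]
      funext i
      fin_cases i <;> simp [he0d, he2d]
    rw [hKmul] at heq
    rwa [heq] at h2
  have S2 : e2 ∈ L → e0 ∈ L := by
    intro h2
    have hk := hKL _ h2
    have h1 := hP1 _ hk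
    rw [hKmul] at h1
    apply hsm (σ₁ : ℂ) e0 hσ'
    have heq : (![(K.mulVec e2) 0, (K.mulVec e2) 1, 0, 0] : Fin 4 → ℂ) = (σ₁:ℂ) • e0 := by
      rw [hKmul]
      funext i
      fin_cases i <;> simp [he0d, he2d]
    rw [hKmul] at heq
    rwa [heq] at h1
  have S3 : e2 ∈ L → e3 ∈ L := by
    intro h2
    have hk := hKL _ h2
    have hb := hP2 _ hk
    have hmem := L.sub_mem hb (L.smul_mem (K₂ 0 0) h2)
    apply hsm (K₂ 1 0) e3 hK210
    have heq : (![0, 0, (K.mulVec e2) 2, (K.mulVec e2) 3] : Fin 4 → ℂ) - K₂ 0 0 • e2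
        = K₂ 1 0 • e3 := by
      rw [hKmul]
      funext i
      fin_cases i <;> simp [he2d, he3d]
    rwa [heq] at hmem
  have S4 : e0 ∈ L → e1 ∈ L := by
    intro h0
    have hk := hKL _ h0
    have ha := hP1 _ hk
    have hmem := L.sub_mem ha (L.smul_mem (K₁ 0 0) h0)
    apply hsm (K₁ 1 0) e1 hK110
    have heq : (![(K.mulVec e0) 0, (K.mulVec e0) 1, 0, 0] : Fin 4 → ℂ) - K₁ 0 0 • e0
        = K₁ 1 0 • e1 := by
      rw [hKmul]
      funext i
      fin_cases i <;> simp [he0d, he1d]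
    rwa [heq] at hmem
  have S5 : e1 ∈ L → e0 ∈ L := by
    intro h1
    have hk := hKL _ h1
    have ha := hP1 _ hk
    have hmem := L.sub_mem ha (L.smul_mem (K₁ 1 1) h1)
    apply hsm (K₁ 0 1) e0 h12
    have heq : (![(K.mulVec e1) 0, (K.mulVec e1) 1, 0, 0] : Fin 4 → ℂ) - K₁ 1 1 • e1
        = K₁ 0 1 • e0 := by
      rw [hKmul]
      funext i
      fin_cases i <;> simp [he0d, he1d]
    rwa [heq] at hmem
  have S6 : e3 ∈ L → e2 ∈ L := by
    intro h3
    have hk := hKL _ h3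
    have hb := hP2 _ hk
    have hmem := L.sub_mem hb (L.smul_mem (K₂ 1 1) h3)
    apply hsm (K₂ 0 1) e2 h34
    have heq : (![0, 0, (K.mulVec e3) 2, (K.mulVec e3) 3] : Fin 4 → ℂ) - K₂ 1 1 • e3
        = K₂ 0 1 • e2 := by
      rw [hKmul]
      funext i
      fin_cases i <;> simp [he2d, he3d]
    rwa [heq] at hmem
  -- main argument
  by_cases hbot : L = ⊥
  · exact Or.inl hbot
  right
  obtain ⟨v, hvL, hv0⟩ := Submodule.exists_mem_ne_zero_of_ne_bot hbot
  -- get e2 ∈ L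
  have he2 : e2 ∈ L := by
    by_cases hv2 : v 2 ≠ 0
    · -- from ![0,0,v2,v3] get e0 then e2
      have hw := hP2 v hvL
      have hk := hKL _ hw
      have h1 := hP1 _ hk
      have he0 : e0 ∈ L := by
        apply hsm ((σ₁ : ℂ) * v 2) e0 (mul_ne_zero hσ' hv2)
        have heq : (![(K.mulVec ![0,0,v 2,v 3]) 0, (K.mulVec ![0,0,v 2,v 3]) 1, 0, 0] :
            Fin 4 → ℂ) = ((σ₁:ℂ) * v 2) • e0 := by
          rw [hKmul]
          funext i
          fin_cases i <;> simp [he0d]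
        rw [hKmul] at heq h1
        rwa [heq] at h1
      exact S1 he0
    · push_neg at hv2
      by_cases hv3 : v 3 ≠ 0
      · have hw := hP2 v hvL
        have he3 : e3 ∈ L := by
          apply hsm (v 3) e3 hv3
          have heq : (![0, 0, v 2, v 3] : Fin 4 → ℂ) = v 3 • e3 := by
            funext i
            fin_cases i <;> simp [he3d, hv2]
          rwa [heq] at hw
        exact S6 he3
      · push_neg at hv3
        by_cases hv0' : v 0 ≠ 0
        · have hw := hP1 v hvL
          have hk := hKL _ hw
          have h2 := hP2 _ hk
          apply hsm ((σ₁ : ℂ) * v 0) e2 (mul_ne_zero hσ' hv0')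
          have heq : (![0, 0, (K.mulVec ![v 0, v 1, 0, 0]) 2, (K.mulVec ![v 0, v 1, 0, 0]) 3] :
              Fin 4 → ℂ) = ((σ₁:ℂ) * v 0) • e2 := by
            rw [hKmul]
            funext i
            fin_cases i <;> simp [he2d]
          rw [hKmul] at heq h2
          rwa [heq] at h2
        · push_neg at hv0'
          have hv1 : v 1 ≠ 0 := by
            intro hv1
            apply hv0
            funext i
            fin_cases i <;> simp [hv0', hv1, hv2, hv3]
          have hw := hP1 v hvL
          have he1 : e1 ∈ L := by
            apply hsm (v 1) e1 hv1
            have heq : (![v 0, v 1, 0, 0] : Fin 4 → ℂ) = v 1 • e1 := by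
              funext i
              fin_cases i <;> simp [he1d, hv0']
            rwa [heq] at hw
          exact S1 (S5 he1)
  have he0 : e0 ∈ L := S2 he2
  have he3 : e3 ∈ L := S3 he2
  have he1 : e1 ∈ L := S4 he0
  -- conclude L = ⊤
  rw [eq_top_iff]
  intro w _
  have hwe : w = w 0 • e0 + w 1 • e1 + w 2 • e2 + w 3 • e3 := by
    funext i
    fin_cases i <;> simp [he0d, he1d, he2d, he3d]
  rw [hwe]
  exact L.add_mem (L.add_mem (L.add_mem (L.smul_mem _ he0) (L.smul_mem _ he1))
    (L.smul_mem _ he2)) (L.smul_mem _ he3)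
end
end

section
/- Let A ∈ ℂ^{n×n} with Hermitian decomposition A = H + iK, and let τ(A) = aH + ibK + cI for a, b, c ∈ ℂ with ab ≠ 0 and b/a not purely imaginary. Then the numerical range satisfies W(τ(A)) = τ(W(A)), where τ acts on ℂ ≅ ℝ² by τ(ξ + iη) = aξ + ibη + c. In particular, the Gau–Wu numbers satisfy k(τ(A)) = k(A). -/
open Matrix Complex

noncomputable section

def nrange {n : ℕ} (A : Matrix (Fin n) (Fin n) ℂ) : Set ℂ :=
  {z | ∃ x : Fin n → ℂ, star x ⬝ᵥ x = 1 ∧ star x ⬝ᵥ A.mulVec x = z}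

def gauWu {n : ℕ} (A : Matrix (Fin n) (Fin n) ℂ) : ℕ :=
  sSup {m | ∃ v : Fin m → (Fin n → ℂ),
    (∀ i j, star (v i) ⬝ᵥ v j = if i = j then 1 else 0) ∧
    ∀ i, star (v i) ⬝ᵥ A.mulVec (v i) ∈ frontier (nrange A)}

lemma quad_conjTranspose {n : ℕ} (A : Matrix (Fin n) (Fin n) ℂ) (x : Fin n → ℂ) :
    star x ⬝ᵥ Aᴴ.mulVec x = starRingEnd ℂ (star x ⬝ᵥ A.mulVec x) := by
  simp only [dotProduct, mulVec, Matrix.conjTranspose_apply, map_sum, _root_.map_mul,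
    Finset.mul_sum, Pi.star_apply]
  rw [Finset.sum_comm]
  refine Finset.sum_congr rfl fun i _ => Finset.sum_congr rfl fun j _ => ?_
  simp [Complex.star_def]
  ring

noncomputable def tauL (a b : ℂ) : ℂ →ₗ[ℝ] ℂ where
  toFun z := a * z.re + Complex.I * b * z.im
  map_add' z w := by simp; ring
  map_smul' r z := by simp [Complex.real_smul]; ring

lemma tauL_inj {a b : ℂ} (ha : a ≠ 0) (hba : (b / a).re ≠ 0) :
    Function.Injective (tauL a b) := by
  rw [injective_iff_map_eq_zero]
  intro z hz
  simp only [tauL, LinearMap.coe_mk, AddHom.coe_mk] at hz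
  have h2 : (z.re : ℂ) + Complex.I * (b / a) * z.im = 0 := by
    field_simp at hz ⊢
    linear_combination hz
  have him : (b / a).re * z.im = 0 := by
    have := congrArg Complex.im h2
    simpa [Complex.mul_im] using this
  have hzim : z.im = 0 := by
    rcases mul_eq_zero.1 him with h | h
    · exact absurd h hba
    · exact h
  have hzre : z.re = 0 := by
    have := congrArg Complex.re h2
    simpa [hzim] using this
  exact Complex.ext hzre hzim

noncomputable def tauHomeo (a b c : ℂ) (ha : a ≠ 0) (hba : (b / a).re ≠ 0) : ℂ ≃ₜ ℂ :=
  ((LinearEquiv.ofBijective (tauL a b)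
    ⟨tauL_inj ha hba, (LinearMap.injective_iff_surjective).1 (tauL_inj ha hba)⟩).toContinuousLinearEquiv.toHomeomorph).trans
    (Homeomorph.addRight c)

lemma tauHomeo_apply (a b c : ℂ) (ha : a ≠ 0) (hba : (b / a).re ≠ 0) (z : ℂ) :
    tauHomeo a b c ha hba z = a * z.re + Complex.I * b * z.im + c := rfl

/-- the affine transformation τ(A) = aH + ibK + cI satisfies
W(τ(A)) = τ(W(A)) (with τ acting on the plane by τ(ξ+iη) = aξ + ibη + c),
and k(τ(A)) = k(A). -/
theorem stmt15 {n : ℕ} (A : Matrix (Fin n) (Fin n) ℂ)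
    (a b c : ℂ) (ha : a ≠ 0) (hb : b ≠ 0) (hba : (b / a).re ≠ 0)
    (H K τA : Matrix (Fin n) (Fin n) ℂ)
    (hH : H = (2⁻¹ : ℂ) • (A + Aᴴ))
    (hK : K = (2 * Complex.I)⁻¹ • (A - Aᴴ))
    (hτA : τA = a • H + (Complex.I * b) • K + c • (1 : Matrix (Fin n) (Fin n) ℂ)) :
    nrange τA =
      (fun z : ℂ => a * (z.re : ℂ) + Complex.I * b * (z.im : ℂ) + c) '' nrange A ∧
    gauWu τA = gauWu A := by
  set τ : ℂ ≃ₜ ℂ := tauHomeo a b c ha hba with hτ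
  have hτap : ∀ z : ℂ, τ z = a * z.re + Complex.I * b * z.im + c :=
    tauHomeo_apply a b c ha hba
  have key : ∀ x : Fin n → ℂ, star x ⬝ᵥ x = 1 →
      star x ⬝ᵥ τA.mulVec x = τ (star x ⬝ᵥ A.mulVec x) := by
    intro x hx
    rw [hτap]
    have hconj := quad_conjTranspose A x
    subst hτA hH hK
    set w := star x ⬝ᵥ A.mulVec x with hw
    simp only [Matrix.add_mulVec, Matrix.smul_mulVec, Matrix.sub_mulVec, dotProduct_add,
      dotProduct_smul, dotProduct_sub, Matrix.one_mulVec, hx, ← hw, hconj, smul_eq_mul]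
    rw [Complex.add_conj, Complex.sub_conj]
    field_simp
    push_cast
    ring
  have hset : nrange τA = τ '' nrange A := by
    ext z
    constructor
    · rintro ⟨x, hx, hz⟩
      exact ⟨_, ⟨x, hx, rfl⟩, by rw [← hz, key x hx]⟩
    · rintro ⟨w, ⟨x, hx, hw⟩, rfl⟩
      exact ⟨x, hx, by rw [key x hx, hw]⟩
  have hfr : frontier (nrange τA) = τ '' frontier (nrange A) := by
    rw [hset, τ.image_frontier]
  constructor
  · rw [hset]
    refine Set.image_congr fun z _ => (hτap z)
  · unfold gauWu
    congr 1
    ext m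
    constructor
    · rintro ⟨v, hortho, hfrv⟩
      refine ⟨v, hortho, fun i => ?_⟩
      have hxi : star (v i) ⬝ᵥ v i = 1 := by simpa using hortho i i
      have := hfrv i
      rw [key (v i) hxi, hfr] at this
      obtain ⟨u, hu, huv⟩ := this
      rwa [← τ.injective huv]
    · rintro ⟨v, hortho, hfrv⟩
      refine ⟨v, hortho, fun i => ?_⟩
      have hxi : star (v i) ⬝ᵥ v i = 1 := by simpa using hortho i i
      rw [key (v i) hxi, hfr]
      exact ⟨_, hfrv i, rfl⟩
end
end

section
/- For any n×n complex matrix A with n ≥ 2, the Gau–Wu number satisfies 2 ≤ k(A) ≤ n; that is, there always exist two orthonormal vectors x, y ∈ ℂⁿ with ⟨Ax,x⟩ ∈ ∂W(A) and ⟨Ay,y⟩ ∈ ∂W(A). -/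
open Matrix Complex

noncomputable section

/- ### Auxiliary lemmas -/

lemma mem_frontier_of_re_max {S : Set ℂ} {z : ℂ} (hz : z ∈ S)
    (h : ∀ w ∈ S, w.re ≤ z.re) : z ∈ frontier S := by
  rw [frontier, Set.mem_diff]
  refine ⟨subset_closure hz, fun hint => ?_⟩
  rw [mem_interior_iff_mem_nhds, Metric.mem_nhds_iff] at hint
  obtain ⟨ε, hε, hball⟩ := hint
  have hw : z + (ε/2 : ℝ) ∈ S := by
    apply hball
    simp [Metric.mem_ball, dist_eq, abs_of_pos, hε, half_lt_self]
  have := h _ hw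
  simp at this
  linarith

lemma mem_frontier_of_re_min {S : Set ℂ} {z : ℂ} (hz : z ∈ S)
    (h : ∀ w ∈ S, z.re ≤ w.re) : z ∈ frontier S := by
  rw [frontier, Set.mem_diff]
  refine ⟨subset_closure hz, fun hint => ?_⟩
  rw [mem_interior_iff_mem_nhds, Metric.mem_nhds_iff] at hint
  obtain ⟨ε, hε, hball⟩ := hint
  have hw : z - (ε/2 : ℝ) ∈ S := by
    apply hball
    simp [Metric.mem_ball, dist_eq, abs_of_pos, hε, half_lt_self]
  have := h _ hw
  simp at this
  linarith

section herm
variable {n : ℕ} {H : Matrix (Fin n) (Fin n) ℂ} (hH : H.IsHermitian)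

/-- The eigenvectors of a Hermitian matrix, as plain vectors. -/
abbrev evec (hH : H.IsHermitian) (i : Fin n) : Fin n → ℂ :=
  (WithLp.equiv 2 _) (hH.eigenvectorBasis i)

lemma dot_H_evec (i : Fin n) (v : Fin n → ℂ) :
    star (evec hH i) ⬝ᵥ H.mulVec v
      = (hH.eigenvalues i : ℂ) * (star (evec hH i) ⬝ᵥ v) := by
  rw [dotProduct_mulVec]
  have h1 : star (evec hH i) ᵥ* H = star (H *ᵥ (evec hH i)) := by
    rw [star_mulVec, hH.eq]
  rw [h1]
  have h2 : H *ᵥ (evec hH i) = hH.eigenvalues i • (evec hH i) :=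
    hH.mulVec_eigenvectorBasis i
  rw [h2]
  have h3 : hH.eigenvalues i • (evec hH i) = ((hH.eigenvalues i : ℂ)) • (evec hH i) := by
    funext j
    simp [Complex.real_smul]
  rw [h3, star_smul, smul_dotProduct, smul_eq_mul, star_def, Complex.conj_ofReal]

lemma dot_evec_evec (i j : Fin n) :
    star (evec hH i) ⬝ᵥ (evec hH j) = if i = j then 1 else 0 := by
  have := orthonormal_iff_ite.mp hH.eigenvectorBasis.orthonormal i j
  rw [← this, EuclideanSpace.inner_eq_star_dotProduct, dotProduct_comm]
  rfl

lemma expand_x (x : Fin n → ℂ) :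
    x = ∑ i, (star (evec hH i) ⬝ᵥ x) • evec hH i := by
  have h := hH.eigenvectorBasis.sum_repr' ((WithLp.equiv 2 (Fin n → ℂ)).symm x)
  have := congrArg (WithLp.linearEquiv 2 ℂ (Fin n → ℂ)) h
  rw [map_sum] at this
  simp only [_root_.map_smul] at this
  convert this.symm using 2
  · rfl
  · rw [EuclideanSpace.inner_eq_star_dotProduct, dotProduct_comm]
    rfl

lemma dot_x_eq (x w : Fin n → ℂ) :
    star x ⬝ᵥ w
      = ∑ i, (starRingEnd ℂ) (star (evec hH i) ⬝ᵥ x) * (star (evec hH i) ⬝ᵥ w) := by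
  conv_lhs => rw [expand_x hH x]
  rw [star_sum]
  have hs : (∑ i, star ((star (evec hH i) ⬝ᵥ x) • evec hH i)) ⬝ᵥ w
      = ∑ i, star ((star (evec hH i) ⬝ᵥ x) • evec hH i) ⬝ᵥ w := by
    simp only [dotProduct, Finset.sum_apply, Finset.sum_mul]
    exact Finset.sum_comm
  rw [hs]
  congr 1
  funext i
  rw [star_smul, smul_dotProduct, smul_eq_mul, star_def]

lemma re_dot_H (x : Fin n → ℂ) :
    (star x ⬝ᵥ H.mulVec x).re
      = ∑ i, hH.eigenvalues i * Complex.normSq (star (evec hH i) ⬝ᵥ x) := by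
  rw [dot_x_eq hH x (H.mulVec x)]
  rw [Complex.re_sum]
  congr 1
  funext i
  rw [dot_H_evec hH i x]
  set c := star (evec hH i) ⬝ᵥ x
  have : (starRingEnd ℂ) c * ((hH.eigenvalues i : ℂ) * c)
      = (hH.eigenvalues i : ℂ) * ((starRingEnd ℂ) c * c) := by ring
  rw [this, mul_comm ((starRingEnd ℂ) c) c, Complex.mul_conj]
  simp

lemma sum_normSq (x : Fin n → ℂ) (hx : star x ⬝ᵥ x = 1) :
    ∑ i, Complex.normSq (star (evec hH i) ⬝ᵥ x) = 1 := by
  have h2 : (star x ⬝ᵥ x).re = ∑ i, Complex.normSq (star (evec hH i) ⬝ᵥ x) := by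
    rw [dot_x_eq hH x x, Complex.re_sum]
    congr 1
    funext i
    rw [mul_comm, Complex.mul_conj]
    simp
  rw [← h2, hx]
  simp

lemma re_dot_H_le {i₀ : Fin n} (hmax : ∀ i, hH.eigenvalues i ≤ hH.eigenvalues i₀)
    (x : Fin n → ℂ) (hx : star x ⬝ᵥ x = 1) :
    (star x ⬝ᵥ H.mulVec x).re ≤ hH.eigenvalues i₀ := by
  rw [re_dot_H hH x]
  calc ∑ i, hH.eigenvalues i * Complex.normSq (star (evec hH i) ⬝ᵥ x)
      ≤ ∑ i, hH.eigenvalues i₀ * Complex.normSq (star (evec hH i) ⬝ᵥ x) :=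
        Finset.sum_le_sum fun i _ =>
          mul_le_mul_of_nonneg_right (hmax i) (Complex.normSq_nonneg _)
    _ = hH.eigenvalues i₀ := by rw [← Finset.mul_sum, sum_normSq hH x hx, mul_one]

lemma le_re_dot_H {j₀ : Fin n} (hmin : ∀ i, hH.eigenvalues j₀ ≤ hH.eigenvalues i)
    (x : Fin n → ℂ) (hx : star x ⬝ᵥ x = 1) :
    hH.eigenvalues j₀ ≤ (star x ⬝ᵥ H.mulVec x).re := by
  rw [re_dot_H hH x]
  calc hH.eigenvalues j₀
      = ∑ i, hH.eigenvalues j₀ * Complex.normSq (star (evec hH i) ⬝ᵥ x) := by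
        rw [← Finset.mul_sum, sum_normSq hH x hx, mul_one]
    _ ≤ ∑ i, hH.eigenvalues i * Complex.normSq (star (evec hH i) ⬝ᵥ x) :=
        Finset.sum_le_sum fun i _ =>
          mul_le_mul_of_nonneg_right (hmin i) (Complex.normSq_nonneg _)

end herm

lemma re_herm_part {n : ℕ} (A : Matrix (Fin n) (Fin n) ℂ) (x : Fin n → ℂ) :
    (star x ⬝ᵥ (A + Aᴴ).mulVec x).re = 2 * (star x ⬝ᵥ A.mulVec x).re := by
  rw [Matrix.add_mulVec, dotProduct_add]
  have h : star x ⬝ᵥ Aᴴ.mulVec x = star (star x ⬝ᵥ A.mulVec x) := by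
    rw [dotProduct_mulVec, ← star_mulVec, star_dotProduct]
  rw [h]
  simp [Complex.add_re]
  ring

/-- for n ≥ 2, the Gau–Wu number satisfies 2 ≤ k(A) ≤ n; in
particular there exist two orthonormal vectors mapping to ∂W(A). -/
theorem stmt19 {n : ℕ} (hn : 2 ≤ n) (A : Matrix (Fin n) (Fin n) ℂ) :
    2 ≤ gauWu A ∧ gauWu A ≤ n ∧
    ∃ x y : Fin n → ℂ, star x ⬝ᵥ x = 1 ∧ star y ⬝ᵥ y = 1 ∧
      star x ⬝ᵥ y = 0 ∧
      star x ⬝ᵥ A.mulVec x ∈ frontier (nrange A) ∧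
      star y ⬝ᵥ A.mulVec y ∈ frontier (nrange A) := by
  have hpos : 0 < n := lt_of_lt_of_le (by norm_num) hn
  haveI : NeZero n := ⟨hpos.ne'⟩
  set H : Matrix (Fin n) (Fin n) ℂ := A + Aᴴ with hHdef
  have hH : H.IsHermitian := Matrix.isHermitian_add_transpose_self A
  -- choose max and min eigenvalue indices
  obtain ⟨i₀, -, hi₀⟩ := Finset.exists_max_image Finset.univ hH.eigenvalues
    ⟨⟨0, hpos⟩, Finset.mem_univ _⟩
  have herase : (Finset.univ.erase i₀).Nonempty := by
    rw [← Finset.card_pos, Finset.card_erase_of_mem (Finset.mem_univ _)]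
    simp only [Finset.card_univ, Fintype.card_fin]
    omega
  obtain ⟨j₀, hj₀mem, hj₀⟩ := Finset.exists_min_image (Finset.univ.erase i₀)
    hH.eigenvalues herase
  have hne : i₀ ≠ j₀ := fun h => (Finset.mem_erase.mp hj₀mem).1 h.symm
  have hmax : ∀ i, hH.eigenvalues i ≤ hH.eigenvalues i₀ :=
    fun i => hi₀ i (Finset.mem_univ _)
  have hmin : ∀ i, hH.eigenvalues j₀ ≤ hH.eigenvalues i := by
    intro i
    by_cases h : i = i₀
    · subst h
      exact hmax j₀
    · exact hj₀ i (Finset.mem_erase.mpr ⟨h, Finset.mem_univ _⟩)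
  set x : Fin n → ℂ := evec hH i₀ with hxdef
  set y : Fin n → ℂ := evec hH j₀ with hydef
  have hx1 : star x ⬝ᵥ x = 1 := by rw [hxdef, dot_evec_evec hH i₀ i₀, if_pos rfl]
  have hy1 : star y ⬝ᵥ y = 1 := by rw [hydef, dot_evec_evec hH j₀ j₀, if_pos rfl]
  have hxy : star x ⬝ᵥ y = 0 := by rw [hxdef, hydef, dot_evec_evec hH i₀ j₀, if_neg hne]
  have hyx : star y ⬝ᵥ x = 0 := by
    rw [hxdef, hydef, dot_evec_evec hH j₀ i₀, if_neg (Ne.symm hne)]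
  -- real parts at the eigenvectors
  have hxH : (star x ⬝ᵥ H.mulVec x).re = hH.eigenvalues i₀ := by
    rw [hxdef, dot_H_evec hH i₀, ← hxdef, hx1, mul_one, Complex.ofReal_re]
  have hyH : (star y ⬝ᵥ H.mulVec y).re = hH.eigenvalues j₀ := by
    rw [hydef, dot_H_evec hH j₀, ← hydef, hy1, mul_one, Complex.ofReal_re]
  -- frontier membership
  have hxfr : star x ⬝ᵥ A.mulVec x ∈ frontier (nrange A) := by
    refine mem_frontier_of_re_max ?_ ?_
    · exact ⟨x, hx1, rfl⟩
    rintro w ⟨u, hu1, rfl⟩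
    have h1 := re_dot_H_le hH hmax u hu1
    have h2 := re_herm_part A u
    have h3 := re_herm_part A x
    rw [hxH] at h3
    rw [h2] at h1
    linarith
  have hyfr : star y ⬝ᵥ A.mulVec y ∈ frontier (nrange A) := by
    refine mem_frontier_of_re_min ?_ ?_
    · exact ⟨y, hy1, rfl⟩
    rintro w ⟨u, hu1, rfl⟩
    have h1 := le_re_dot_H hH hmin u hu1
    have h2 := re_herm_part A u
    have h3 := re_herm_part A y
    rw [hyH] at h3
    rw [h2] at h1
    linarith
  -- the defining set of gauWu
  set S : Set ℕ := {m | ∃ v : Fin m → (Fin n → ℂ),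
    (∀ i j, star (v i) ⬝ᵥ v j = if i = j then 1 else 0) ∧
    ∀ i, star (v i) ⬝ᵥ A.mulVec (v i) ∈ frontier (nrange A)} with hSdef
  have h2S : 2 ∈ S := by
    refine ⟨![x, y], ?_, ?_⟩
    · intro i j
      fin_cases i <;> fin_cases j <;>
        simp [hx1, hy1, hxy, hyx]
    · intro i
      fin_cases i
      · simpa using hxfr
      · simpa using hyfr
  have hbound : ∀ m ∈ S, m ≤ n := by
    rintro m ⟨v, hv, -⟩
    have hortho : Orthonormal ℂ (fun i => (WithLp.equiv 2 (Fin n → ℂ)).symm (v i)) := by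
      rw [orthonormal_iff_ite]
      intro i j
      rw [EuclideanSpace.inner_eq_star_dotProduct, dotProduct_comm]
      exact hv i j
    have hli := hortho.linearIndependent
    have := hli.fintype_card_le_finrank
    simpa [finrank_euclideanSpace_fin] using this
  have hbdd : BddAbove S := ⟨n, fun m hm => hbound m hm⟩
  refine ⟨le_csSup hbdd h2S, csSup_le ⟨2, h2S⟩ hbound, x, y, hx1, hy1, hxy, hxfr, hyfr⟩
end
end
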